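/- arXiv:1812.04195 — 2 statements merged into one kernel-verified Lean document; each statement's English description precedes it below -/
import Mathlib

section
/- Let N be a finite set with |N| = n, let G = (N, E_G) and G∘ = (N, E∘) be directed graphs without self-loops, and set N(i) = N_G(i) ∪ N∘(i), N̄(i) = N(i) ∪ {i}, where N_G(i), N∘(i) are in-neighborhoods. Let 𝒢 ⊆ 𝒢∘ be sub-σ-algebras, and let (Y_{i,1})_{i∈N}, (Y_{j,0})_{j∈N} be {0,1}-valued random variables. Define ε_{i,1} = Y_{i,1} − E[Y_{i,1}|𝒢], ε_{j,0} = Y_{j,0} − E[Y_{j,0}|𝒢], and a_i = Σ_{j∈N_G(i)} ε_{j,0}. Suppose that whenever N̄(i₁) ∩ N̄(i₂) = ∅, the random vectors (Y_{i₁,1}, (Y_{j,0})_{j∈N̄(i₁)}) and (Y_{i₂,1}, (Y_{j,0})_{j∈N̄(i₂)}) are conditionally independent given 𝒢∘. Then: (i) Cov(ε_{i₁,1} a_{i₁}, ε_{i₂,1} a_{i₂} | 𝒢∘) = 0 almost surely for every pair i₁, i₂ with N̄(i₁) ∩ N̄(i₂) = ∅; and consequently (ii) almost surely, Var( Σ_{i∈N}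 ε_{i,1} a_i | 𝒢∘ ) ≤ 2·d_{mx,G}² · #{(i₁, i₂) ∈ N×N : N̄(i₁) ∩ N̄(i₂) ≠ ∅}, where d_{mx,G} = max_{i∈N} |N_G(i)|. -/
open MeasureTheory ProbabilityTheory

/-- Conditional covariance of two real random variables given a sub-σ-algebra `m`. -/
noncomputable def condCov {Ω : Type*} {m0 : MeasurableSpace Ω} (μ : Measure Ω)
    (m : MeasurableSpace Ω) (X Y : Ω → ℝ) : Ω → ℝ :=
  fun ω => (μ[fun ω' => X ω' * Y ω' | m]) ω - (μ[X | m]) ω * (μ[Y | m]) ω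

/-- In-neighborhood of `i` in the directed graph with edge set `E`. -/
def inNbhd {N : Type*} [Fintype N] [DecidableEq N] (E : Finset (N × N)) (i : N) : Finset N :=
  Finset.univ.filter (fun j => (i, j) ∈ E)

section Aux

variable {Ω : Type*}

lemma myIntegrable {mΩ : MeasurableSpace Ω} {μ : Measure Ω} [IsFiniteMeasure μ] {f : Ω → ℝ} (hf : AEStronglyMeasurable f μ)
    {C : ℝ} (h : ∀ᵐ ω ∂μ, |f ω| ≤ C) : Integrable f μ :=
  ⟨hf, HasFiniteIntegral.of_bounded (by simpa [Real.norm_eq_abs] using h)⟩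

lemma aeSumEq {mΩ : MeasurableSpace Ω} {μ : Measure Ω} {ι : Type*} [Fintype ι] {f g : ι → Ω → ℝ} (h : ∀ i, f i =ᵐ[μ] g i) :
    (fun ω => ∑ i, f i ω) =ᵐ[μ] fun ω => ∑ i, g i ω := by
  filter_upwards [ae_all_iff.2 h] with ω hω
  exact Finset.sum_congr rfl fun i _ => hω i

/-- Core indicator lemma: product rule for conditional expectations under
conditional independence, with bounded `m'`-measurable multipliers. -/
lemma coreLemma {m' m₁ m₂ : MeasurableSpace Ω} {mΩ : MeasurableSpace Ω} [StandardBorelSpace Ω]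
    {μ : Measure Ω} [IsProbabilityMeasure μ]
    (hm' : m' ≤ mΩ) (hm₁ : m₁ ≤ mΩ) (hm₂ : m₂ ≤ mΩ)
    (h : CondIndep m' m₁ m₂ hm' μ)
    {S T : Set Ω} (hS : MeasurableSet[m₁] S) (hT : MeasurableSet[m₂] T)
    {W V : Ω → ℝ} (hW : StronglyMeasurable[m'] W) (hV : StronglyMeasurable[m'] V)
    (hWb : ∀ᵐ ω ∂μ, |W ω| ≤ 1) (hVb : ∀ᵐ ω ∂μ, |V ω| ≤ 1) :
    μ[fun ω => (W ω * S.indicator (fun _ => (1:ℝ)) ω) * (V ω * T.indicator (fun _ => (1:ℝ)) ω)|m']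
      =ᵐ[μ] fun ω =>
        (μ[fun ω => W ω * S.indicator (fun _ => (1:ℝ)) ω|m']) ω
          * (μ[fun ω => V ω * T.indicator (fun _ => (1:ℝ)) ω|m']) ω := by
  have hWm : Measurable W := (hW.mono hm').measurable
  have hVm : Measurable V := (hV.mono hm').measurable
  have hSm : MeasurableSet S := hm₁ _ hS
  have hTm : MeasurableSet T := hm₂ _ hT
  have hindb : ∀ (U : Set Ω) (ω : Ω), |U.indicator (fun _ => (1:ℝ)) ω| ≤ 1 := by
    intro U ω
    by_cases hω : ω ∈ U <;> simp [Set.indicator_apply, hω]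
  have hindm : ∀ {U : Set Ω}, MeasurableSet U → Measurable (U.indicator (fun _ => (1:ℝ))) :=
    fun hU => measurable_const.indicator hU
  have hindint : ∀ {U : Set Ω}, MeasurableSet U →
      Integrable (U.indicator (fun _ => (1:ℝ))) μ := fun hU =>
    myIntegrable (hindm hU).aestronglyMeasurable (Filter.Eventually.of_forall (hindb _))
  -- pull-out lemmas
  have hpull : ∀ {U : Set Ω} (hU : MeasurableSet U) (X : Ω → ℝ), StronglyMeasurable[m'] X →
      (∀ᵐ ω ∂μ, |X ω| ≤ 1) →
      μ[fun ω => X ω * U.indicator (fun _ => (1:ℝ)) ω|m']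
        =ᵐ[μ] fun ω => X ω * (μ[U.indicator (fun _ => (1:ℝ))|m']) ω := by
    intro U hU X hXsm hXb
    have hXm : Measurable X := (hXsm.mono hm').measurable
    have h1 : Integrable (X * U.indicator (fun _ => (1:ℝ))) μ := by
      refine myIntegrable ((hXm.mul (hindm hU)).aestronglyMeasurable) (C := 1) ?_
      filter_upwards [hXb] with ω hω
      calc |X ω * U.indicator (fun _ => (1:ℝ)) ω| = |X ω| * |U.indicator _ ω| := abs_mul _ _
        _ ≤ 1 * 1 := mul_le_mul hω (hindb U ω) (abs_nonneg _) zero_le_one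
        _ = 1 := one_mul 1
    exact condExp_mul_of_stronglyMeasurable_left hXsm h1 (hindint hU)
  -- product of indicators
  have hprod : ∀ ω, (W ω * S.indicator (fun _ => (1:ℝ)) ω) * (V ω * T.indicator (fun _ => (1:ℝ)) ω)
      = (W ω * V ω) * (S ∩ T).indicator (fun _ => (1:ℝ)) ω := by
    intro ω
    by_cases hωS : ω ∈ S <;> by_cases hωT : ω ∈ T <;>
      simp [Set.indicator_apply, hωS, hωT] <;> ring
  have hWVb : ∀ᵐ ω ∂μ, |W ω * V ω| ≤ 1 := by
    filter_upwards [hWb, hVb] with ω h1 h2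
    calc |W ω * V ω| = |W ω| * |V ω| := abs_mul _ _
      _ ≤ 1 * 1 := mul_le_mul h1 h2 (abs_nonneg _) zero_le_one
      _ = 1 := one_mul 1
  have hST : μ[(S ∩ T).indicator (fun _ => (1:ℝ))|m']
      =ᵐ[μ] fun ω => (μ[S.indicator (fun _ => (1:ℝ))|m']) ω * (μ[T.indicator (fun _ => (1:ℝ))|m']) ω := by
    have := ((condIndep_iff m' m₁ m₂ hm' hm₁ hm₂ μ).mp h) S T hS hT
    exact this
  calc μ[fun ω => (W ω * S.indicator (fun _ => (1:ℝ)) ω) * (V ω * T.indicator (fun _ => (1:ℝ)) ω)|m']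
      =ᵐ[μ] μ[fun ω => (W ω * V ω) * (S ∩ T).indicator (fun _ => (1:ℝ)) ω|m'] :=
        condExp_congr_ae (Filter.Eventually.of_forall hprod)
    _ =ᵐ[μ] fun ω => (W ω * V ω) * (μ[(S ∩ T).indicator (fun _ => (1:ℝ))|m']) ω :=
        hpull (hSm.inter hTm) _ (hW.mul hV) hWVb
    _ =ᵐ[μ] fun ω => (W ω * (μ[S.indicator (fun _ => (1:ℝ))|m']) ω)
          * (V ω * (μ[T.indicator (fun _ => (1:ℝ))|m']) ω) := by
        filter_upwards [hST] with ω hω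
        simp only [hω]; ring
    _ =ᵐ[μ] fun ω =>
        (μ[fun ω => W ω * S.indicator (fun _ => (1:ℝ)) ω|m']) ω
          * (μ[fun ω => V ω * T.indicator (fun _ => (1:ℝ)) ω|m']) ω := by
        filter_upwards [hpull hSm W hW hWb, hpull hTm V hV hVb] with ω h1 h2
        rw [h1, h2]


lemma funSumF {Ω : Type*} {γ : Type*} (s : Finset γ) (f : γ → Ω → ℝ) :
    (fun ω => ∑ c ∈ s, f c ω) = ∑ c ∈ s, f c := by
  funext ω; simp

lemma aeSumEqF {Ω : Type*} {mΩ : MeasurableSpace Ω} {μ : Measure Ω} {γ : Type*}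
    (s : Finset γ) {f g : γ → Ω → ℝ} (h : ∀ i ∈ s, f i =ᵐ[μ] g i) :
    (fun ω => ∑ i ∈ s, f i ω) =ᵐ[μ] fun ω => ∑ i ∈ s, g i ω := by
  filter_upwards [(ae_ball_iff s.countable_toSet).2 h] with ω hω
  exact Finset.sum_congr rfl fun i hi => hω i hi

/-- If conditional expectations factor pairwise, they factor for sums. -/
lemma sumFactor {Ω : Type*} {m' : MeasurableSpace Ω} {mΩ : MeasurableSpace Ω}
    {μ : Measure Ω} [IsFiniteMeasure μ]
    {ι κ : Type*} (s : Finset ι) (t : Finset κ) (u : ι → Ω → ℝ) (v : κ → Ω → ℝ)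
    (hu : ∀ a ∈ s, Integrable (u a) μ) (hv : ∀ b ∈ t, Integrable (v b) μ)
    (huv : ∀ p ∈ s ×ˢ t, Integrable (fun ω => u p.1 ω * v p.2 ω) μ)
    (hfac : ∀ p ∈ s ×ˢ t, μ[fun ω => u p.1 ω * v p.2 ω|m']
      =ᵐ[μ] fun ω => (μ[u p.1|m']) ω * (μ[v p.2|m']) ω) :
    μ[fun ω => (∑ a ∈ s, u a ω) * (∑ b ∈ t, v b ω)|m']
      =ᵐ[μ] fun ω =>
        (μ[fun ω => ∑ a ∈ s, u a ω|m']) ω * (μ[fun ω => ∑ b ∈ t, v b ω|m']) ω := by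
  have hsplit : (fun ω => (∑ a ∈ s, u a ω) * (∑ b ∈ t, v b ω))
      = fun ω => ∑ p ∈ s ×ˢ t, u p.1 ω * v p.2 ω := by
    funext ω; rw [Finset.sum_mul_sum, Finset.sum_product]
  calc μ[fun ω => (∑ a ∈ s, u a ω) * (∑ b ∈ t, v b ω)|m']
      = μ[fun ω => ∑ p ∈ s ×ˢ t, u p.1 ω * v p.2 ω|m'] := by rw [hsplit]
    _ =ᵐ[μ] fun ω => ∑ p ∈ s ×ˢ t, (μ[fun ω => u p.1 ω * v p.2 ω|m']) ω := by
        rw [funSumF (s ×ˢ t) fun p ω => u p.1 ω * v p.2 ω]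
        refine (condExp_finsetSum (fun p hp => huv p hp) _).trans ?_
        rw [funSumF (s ×ˢ t) fun p => μ[fun ω => u p.1 ω * v p.2 ω|m']]
    _ =ᵐ[μ] fun ω => ∑ p ∈ s ×ˢ t, (μ[u p.1|m']) ω * (μ[v p.2|m']) ω :=
        aeSumEqF _ fun p hp => hfac p hp
    _ =ᵐ[μ] fun ω => (∑ a ∈ s, (μ[u a|m']) ω) * (∑ b ∈ t, (μ[v b|m']) ω) := by
        filter_upwards with ω
        rw [Finset.sum_mul_sum, Finset.sum_product]
    _ =ᵐ[μ] fun ω => (μ[fun ω => ∑ a ∈ s, u a ω|m']) ω * (μ[fun ω => ∑ b ∈ t, v b ω|m']) ω := by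
        have h1 : μ[fun ω => ∑ a ∈ s, u a ω|m'] =ᵐ[μ] fun ω => ∑ a ∈ s, (μ[u a|m']) ω := by
          rw [funSumF s u]
          refine (condExp_finsetSum hu _).trans ?_
          rw [funSumF s fun a => μ[u a|m']]
        have h2 : μ[fun ω => ∑ b ∈ t, v b ω|m'] =ᵐ[μ] fun ω => ∑ b ∈ t, (μ[v b|m']) ω := by
          rw [funSumF t v]
          refine (condExp_finsetSum hv _).trans ?_
          rw [funSumF t fun b => μ[v b|m']]
        filter_upwards [h1, h2] with ω e1 e2
        rw [e1, e2]

/-- Decomposition of a product of centered indicators into elementary terms. -/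
lemma epsDecomp (A B : Set Ω) (c d : Ω → ℝ) (ω : Ω) :
    (A.indicator (fun _ => (1:ℝ)) ω - c ω) * (B.indicator (fun _ => (1:ℝ)) ω - d ω)
      = ∑ a : Fin 4,
          ![fun _ => (1:ℝ), fun ω => -d ω, fun ω => -c ω, fun ω => c ω * d ω] a ω
            * ((![A ∩ B, A, B, Set.univ] : Fin 4 → Set Ω) a).indicator (fun _ => (1:ℝ)) ω := by
  by_cases hA : ω ∈ A <;> by_cases hB : ω ∈ B <;>
    simp [Fin.sum_univ_four, Set.indicator_apply, hA, hB] <;> ring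


/-- Factorization of the conditional expectation of a product of centered
`{0,1}`-valued variables under conditional independence. -/
lemma keyPair {Ω : Type*} {m' m₁ m₂ : MeasurableSpace Ω} {mΩ : MeasurableSpace Ω}
    [StandardBorelSpace Ω] {μ : Measure Ω} [IsProbabilityMeasure μ]
    (hm' : m' ≤ mΩ) (hm₁ : m₁ ≤ mΩ) (hm₂ : m₂ ≤ mΩ)
    (h : CondIndep m' m₁ m₂ hm' μ)
    {f₁ g₁ f₂ g₂ c₁ d₁ c₂ d₂ : Ω → ℝ} {A₁ B₁ A₂ B₂ : Set Ω}
    (hA₁ : MeasurableSet[m₁] A₁) (hB₁ : MeasurableSet[m₁] B₁)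
    (hA₂ : MeasurableSet[m₂] A₂) (hB₂ : MeasurableSet[m₂] B₂)
    (hf₁ : ∀ ω, f₁ ω = A₁.indicator (fun _ => (1:ℝ)) ω)
    (hg₁ : ∀ ω, g₁ ω = B₁.indicator (fun _ => (1:ℝ)) ω)
    (hf₂ : ∀ ω, f₂ ω = A₂.indicator (fun _ => (1:ℝ)) ω)
    (hg₂ : ∀ ω, g₂ ω = B₂.indicator (fun _ => (1:ℝ)) ω)
    (hc₁ : StronglyMeasurable[m'] c₁) (hd₁ : StronglyMeasurable[m'] d₁)
    (hc₂ : StronglyMeasurable[m'] c₂) (hd₂ : StronglyMeasurable[m'] d₂)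
    (hc₁b : ∀ᵐ ω ∂μ, |c₁ ω| ≤ 1) (hd₁b : ∀ᵐ ω ∂μ, |d₁ ω| ≤ 1)
    (hc₂b : ∀ᵐ ω ∂μ, |c₂ ω| ≤ 1) (hd₂b : ∀ᵐ ω ∂μ, |d₂ ω| ≤ 1) :
    μ[fun ω => ((f₁ ω - c₁ ω) * (g₁ ω - d₁ ω)) * ((f₂ ω - c₂ ω) * (g₂ ω - d₂ ω))|m']
      =ᵐ[μ] fun ω => (μ[fun ω => (f₁ ω - c₁ ω) * (g₁ ω - d₁ ω)|m']) ω
          * (μ[fun ω => (f₂ ω - c₂ ω) * (g₂ ω - d₂ ω)|m']) ω := by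
  set W₁ : Fin 4 → Ω → ℝ :=
    ![fun _ => (1:ℝ), fun ω => -d₁ ω, fun ω => -c₁ ω, fun ω => c₁ ω * d₁ ω] with hW₁def
  set S₁ : Fin 4 → Set Ω := ![A₁ ∩ B₁, A₁, B₁, Set.univ] with hS₁def
  set W₂ : Fin 4 → Ω → ℝ :=
    ![fun _ => (1:ℝ), fun ω => -d₂ ω, fun ω => -c₂ ω, fun ω => c₂ ω * d₂ ω] with hW₂def
  set S₂ : Fin 4 → Set Ω := ![A₂ ∩ B₂, A₂, B₂, Set.univ] with hS₂def
  have hS₁ : ∀ a, MeasurableSet[m₁] (S₁ a) := by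
    intro a
    fin_cases a
    · exact hA₁.inter hB₁
    · exact hA₁
    · exact hB₁
    · exact MeasurableSet.univ
  have hS₂ : ∀ a, MeasurableSet[m₂] (S₂ a) := by
    intro a
    fin_cases a
    · exact hA₂.inter hB₂
    · exact hA₂
    · exact hB₂
    · exact MeasurableSet.univ
  have hWm₁ : ∀ a, StronglyMeasurable[m'] (W₁ a) := by
    intro a
    fin_cases a
    · exact stronglyMeasurable_const
    · exact hd₁.neg
    · exact hc₁.neg
    · exact hc₁.mul hd₁
  have hWm₂ : ∀ a, StronglyMeasurable[m'] (W₂ a) := by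
    intro a
    fin_cases a
    · exact stronglyMeasurable_const
    · exact hd₂.neg
    · exact hc₂.neg
    · exact hc₂.mul hd₂
  have habs : ∀ {x y : ℝ}, |x| ≤ 1 → |y| ≤ 1 → |x * y| ≤ 1 := by
    intro x y hx hy
    calc |x * y| = |x| * |y| := abs_mul _ _
      _ ≤ 1 * 1 := mul_le_mul hx hy (abs_nonneg _) zero_le_one
      _ = 1 := one_mul 1
  have hWb₁ : ∀ a, ∀ᵐ ω ∂μ, |W₁ a ω| ≤ 1 := by
    intro a
    fin_cases a
    · filter_upwards with ω; simp [hW₁def]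
    · filter_upwards [hd₁b] with ω hω; simpa [hW₁def] using hω
    · filter_upwards [hc₁b] with ω hω; simpa [hW₁def] using hω
    · filter_upwards [hc₁b, hd₁b] with ω h1 h2; simpa [hW₁def] using habs h1 h2
  have hWb₂ : ∀ a, ∀ᵐ ω ∂μ, |W₂ a ω| ≤ 1 := by
    intro a
    fin_cases a
    · filter_upwards with ω; simp [hW₂def]
    · filter_upwards [hd₂b] with ω hω; simpa [hW₂def] using hω
    · filter_upwards [hc₂b] with ω hω; simpa [hW₂def] using hω
    · filter_upwards [hc₂b, hd₂b] with ω h1 h2; simpa [hW₂def] using habs h1 h2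
  have hindb : ∀ (U : Set Ω) (ω : Ω), |U.indicator (fun _ => (1:ℝ)) ω| ≤ 1 := by
    intro U ω; by_cases hω : ω ∈ U <;> simp [Set.indicator_apply, hω]
  have hu : ∀ a, Integrable (fun ω => W₁ a ω * (S₁ a).indicator (fun _ => (1:ℝ)) ω) μ := by
    intro a
    refine myIntegrable (((hWm₁ a).mono hm').measurable.mul
      (measurable_const.indicator (hm₁ _ (hS₁ a)))).aestronglyMeasurable (C := 1) ?_
    filter_upwards [hWb₁ a] with ω hω
    exact habs hω (hindb _ ω)
  have hv : ∀ a, Integrable (fun ω => W₂ a ω * (S₂ a).indicator (fun _ => (1:ℝ)) ω) μ := by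
    intro a
    refine myIntegrable (((hWm₂ a).mono hm').measurable.mul
      (measurable_const.indicator (hm₂ _ (hS₂ a)))).aestronglyMeasurable (C := 1) ?_
    filter_upwards [hWb₂ a] with ω hω
    exact habs hω (hindb _ ω)
  have e₁ : ∀ ω, (f₁ ω - c₁ ω) * (g₁ ω - d₁ ω)
      = ∑ a, W₁ a ω * (S₁ a).indicator (fun _ => (1:ℝ)) ω := by
    intro ω
    rw [hf₁ ω, hg₁ ω, hW₁def, hS₁def]
    exact epsDecomp A₁ B₁ c₁ d₁ ω
  have e₂ : ∀ ω, (f₂ ω - c₂ ω) * (g₂ ω - d₂ ω)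
      = ∑ a, W₂ a ω * (S₂ a).indicator (fun _ => (1:ℝ)) ω := by
    intro ω
    rw [hf₂ ω, hg₂ ω, hW₂def, hS₂def]
    exact epsDecomp A₂ B₂ c₂ d₂ ω
  simp only [e₁, e₂]
  refine sumFactor Finset.univ Finset.univ
    (fun a ω => W₁ a ω * (S₁ a).indicator (fun _ => (1:ℝ)) ω)
    (fun b ω => W₂ b ω * (S₂ b).indicator (fun _ => (1:ℝ)) ω)
    (fun a _ => hu a) (fun b _ => hv b) ?_ ?_
  · intro p _
    refine myIntegrable ((((hWm₁ p.1).mono hm').measurable.mul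
      (measurable_const.indicator (hm₁ _ (hS₁ p.1)))).mul
      (((hWm₂ p.2).mono hm').measurable.mul
      (measurable_const.indicator (hm₂ _ (hS₂ p.2))))).aestronglyMeasurable (C := 1) ?_
    filter_upwards [hWb₁ p.1, hWb₂ p.2] with ω h1 h2
    exact habs (habs h1 (hindb _ ω)) (habs h2 (hindb _ ω))
  · intro p _
    exact coreLemma hm' hm₁ hm₂ h (hS₁ p.1) (hS₂ p.2) (hWm₁ p.1) (hWm₂ p.2)
      (hWb₁ p.1) (hWb₂ p.2)

end Aux


/-- Lemma B.1(ii) of the supplemental note to He–Song, "Measuring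
Diffusion over a Large Network".  With `N(i) = N_G(i) ∪ N∘(i)` and `N̄(i) = N(i) ∪ {i}`,
if the vectors `(Y_{i,1}, (Y_{j,0})_{j ∈ N̄(i)})` are conditionally independent given `𝒢∘`
whenever the closed neighborhoods are disjoint, then (i) the corresponding products
`ε_{i,1} a_i` are conditionally uncorrelated given `𝒢∘`, and (ii) the conditional variance
of their sum is at most `2 d_{mx,G}²` times the number of overlapping pairs. -/
theorem stmt14 {Ω : Type*} [mΩ : MeasurableSpace Ω] [StandardBorelSpace Ω]
    (μ : Measure Ω) [IsProbabilityMeasure μ]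
    {N : Type*} [Fintype N] [DecidableEq N]
    (EG E0 : Finset (N × N)) (hEG : ∀ e ∈ EG, e.1 ≠ e.2) (hE0 : ∀ e ∈ E0, e.1 ≠ e.2)
    (Y0 Y1 : N → Ω → ℝ)
    (hY0m : ∀ j, Measurable (Y0 j)) (hY1m : ∀ i, Measurable (Y1 i))
    (hY0b : ∀ j ω, Y0 j ω = 0 ∨ Y0 j ω = 1)
    (hY1b : ∀ i ω, Y1 i ω = 0 ∨ Y1 i ω = 1)
    (G G0 : MeasurableSpace Ω) (hGG0 : G ≤ G0) (hG0 : G0 ≤ mΩ)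
    (hdep : ∀ i₁ i₂ : N,
      (insert i₁ (inNbhd EG i₁ ∪ inNbhd E0 i₁)) ∩ (insert i₂ (inNbhd EG i₂ ∪ inNbhd E0 i₂)) = ∅ →
      CondIndepFun G0 hG0
        (fun ω => (Y1 i₁ ω,
          fun j : ((insert i₁ (inNbhd EG i₁ ∪ inNbhd E0 i₁) : Finset N) : Type _) => Y0 j ω))
        (fun ω => (Y1 i₂ ω,
          fun j : ((insert i₂ (inNbhd EG i₂ ∪ inNbhd E0 i₂) : Finset N) : Type _) => Y0 j ω))
        μ) :
    -- (i) zero conditional covariance for non-overlapping pairs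
    (∀ i₁ i₂ : N,
      (insert i₁ (inNbhd EG i₁ ∪ inNbhd E0 i₁)) ∩ (insert i₂ (inNbhd EG i₂ ∪ inNbhd E0 i₂)) = ∅ →
      condCov μ G0
        (fun ω => (Y1 i₁ ω - (μ[Y1 i₁ | G]) ω)
          * ∑ j ∈ inNbhd EG i₁, (Y0 j ω - (μ[Y0 j | G]) ω))
        (fun ω => (Y1 i₂ ω - (μ[Y1 i₂ | G]) ω)
          * ∑ j ∈ inNbhd EG i₂, (Y0 j ω - (μ[Y0 j | G]) ω)) =ᵐ[μ] 0)
    -- (ii) conditional variance bound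
    ∧ (∀ᵐ ω ∂μ,
      (μ[fun ω' =>
          ((∑ i, (Y1 i ω' - (μ[Y1 i | G]) ω')
              * ∑ j ∈ inNbhd EG i, (Y0 j ω' - (μ[Y0 j | G]) ω'))
            - (μ[fun ω'' => ∑ i, (Y1 i ω'' - (μ[Y1 i | G]) ω'')
                  * ∑ j ∈ inNbhd EG i, (Y0 j ω'' - (μ[Y0 j | G]) ω'') | G0]) ω') ^ 2
        | G0]) ω
        ≤ 2 * ((Finset.univ.sup (fun i => (inNbhd EG i).card) : ℕ) : ℝ) ^ 2
            * (((Finset.univ ×ˢ Finset.univ).filter (fun q : N × N =>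
                ((insert q.1 (inNbhd EG q.1 ∪ inNbhd E0 q.1))
                  ∩ (insert q.2 (inNbhd EG q.2 ∪ inNbhd E0 q.2))).Nonempty)).card : ℝ)) := by
  classical
  letI : MeasurableSpace Ω := mΩ
  have hGm : G ≤ mΩ := hGG0.trans hG0
  -- basic facts about the conditional means
  have hY1abs : ∀ i ω, |Y1 i ω| ≤ 1 := by
    intro i ω; rcases hY1b i ω with h | h <;> simp [h]
  have hY0abs : ∀ j ω, |Y0 j ω| ≤ 1 := by
    intro j ω; rcases hY0b j ω with h | h <;> simp [h]
  have hc_sm : ∀ i, StronglyMeasurable[G0] (μ[Y1 i|G]) :=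
    fun i => stronglyMeasurable_condExp.mono hGG0
  have hd_sm : ∀ j, StronglyMeasurable[G0] (μ[Y0 j|G]) :=
    fun j => stronglyMeasurable_condExp.mono hGG0
  have hc_m : ∀ i, Measurable[mΩ] (μ[Y1 i|G]) :=
    fun i => (stronglyMeasurable_condExp.mono hGm).measurable
  have hd_m : ∀ j, Measurable[mΩ] (μ[Y0 j|G]) :=
    fun j => (stronglyMeasurable_condExp.mono hGm).measurable
  have hc_b : ∀ i, ∀ᵐ ω ∂μ, |(μ[Y1 i|G]) ω| ≤ 1 := by
    intro i
    have := ae_bdd_condExp_of_ae_bdd (m := G) (μ := μ) (R := 1) (f := Y1 i)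
      (Filter.Eventually.of_forall fun ω => by simpa using hY1abs i ω)
    simpa using this
  have hd_b : ∀ j, ∀ᵐ ω ∂μ, |(μ[Y0 j|G]) ω| ≤ 1 := by
    intro j
    have := ae_bdd_condExp_of_ae_bdd (m := G) (μ := μ) (R := 1) (f := Y0 j)
      (Filter.Eventually.of_forall fun ω => by simpa using hY0abs j ω)
    simpa using this
  have hY1int : ∀ i, Integrable (Y1 i) μ := fun i =>
    myIntegrable (hY1m i).aestronglyMeasurable (Filter.Eventually.of_forall (hY1abs i))
  have hY0int : ∀ j, Integrable (Y0 j) μ := fun j =>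
    myIntegrable (hY0m j).aestronglyMeasurable (Filter.Eventually.of_forall (hY0abs j))
  -- bounds on centered variables
  have hε1b : ∀ i, ∀ᵐ ω ∂μ, |Y1 i ω - (μ[Y1 i|G]) ω| ≤ 1 := by
    intro i
    have h0 : 0 ≤ᵐ[μ] μ[Y1 i|G] := condExp_nonneg (Filter.Eventually.of_forall fun ω => by
      rcases hY1b i ω with h | h <;> simp [h])
    filter_upwards [h0, hc_b i] with ω h1 h2
    simp only [Pi.zero_apply] at h1
    rcases hY1b i ω with h | h <;> rw [h] <;> rw [abs_le] at h2 ⊢ <;>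
      constructor <;> linarith [h2.1, h2.2]
  have hε0b : ∀ j, ∀ᵐ ω ∂μ, |Y0 j ω - (μ[Y0 j|G]) ω| ≤ 1 := by
    intro j
    have h0 : 0 ≤ᵐ[μ] μ[Y0 j|G] := condExp_nonneg (Filter.Eventually.of_forall fun ω => by
      rcases hY0b j ω with h | h <;> simp [h])
    filter_upwards [h0, hd_b j] with ω h1 h2
    simp only [Pi.zero_apply] at h1
    rcases hY0b j ω with h | h <;> rw [h] <;> rw [abs_le] at h2 ⊢ <;>
      constructor <;> linarith [h2.1, h2.2]
  -- the key factorization for non-overlapping pairs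
  have keyI : ∀ i₁ i₂ : N,
      (insert i₁ (inNbhd EG i₁ ∪ inNbhd E0 i₁)) ∩ (insert i₂ (inNbhd EG i₂ ∪ inNbhd E0 i₂)) = ∅ →
      μ[fun ω => ((Y1 i₁ ω - (μ[Y1 i₁|G]) ω)
            * ∑ j ∈ inNbhd EG i₁, (Y0 j ω - (μ[Y0 j|G]) ω))
          * ((Y1 i₂ ω - (μ[Y1 i₂|G]) ω)
            * ∑ j ∈ inNbhd EG i₂, (Y0 j ω - (μ[Y0 j|G]) ω))|G0]
        =ᵐ[μ] fun ω =>
          (μ[fun ω => (Y1 i₁ ω - (μ[Y1 i₁|G]) ω)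
              * ∑ j ∈ inNbhd EG i₁, (Y0 j ω - (μ[Y0 j|G]) ω)|G0]) ω
            * (μ[fun ω => (Y1 i₂ ω - (μ[Y1 i₂|G]) ω)
                * ∑ j ∈ inNbhd EG i₂, (Y0 j ω - (μ[Y0 j|G]) ω)|G0]) ω := by
    intro i₁ i₂ hdis
    have hV₁m : Measurable[mΩ] (fun ω => (Y1 i₁ ω,
        fun j : ((insert i₁ (inNbhd EG i₁ ∪ inNbhd E0 i₁) : Finset N) : Type _) => Y0 j ω)) :=
      (hY1m i₁).prodMk (measurable_pi_lambda _ fun j => hY0m j)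
    have hV₂m : Measurable[mΩ] (fun ω => (Y1 i₂ ω,
        fun j : ((insert i₂ (inNbhd EG i₂ ∪ inNbhd E0 i₂) : Finset N) : Type _) => Y0 j ω)) :=
      (hY1m i₂).prodMk (measurable_pi_lambda _ fun j => hY0m j)
    set m₁ := MeasurableSpace.comap (fun ω => (Y1 i₁ ω,
        fun j : ((insert i₁ (inNbhd EG i₁ ∪ inNbhd E0 i₁) : Finset N) : Type _) => Y0 j ω))
        inferInstance with hm₁def
    set m₂ := MeasurableSpace.comap (fun ω => (Y1 i₂ ω,
        fun j : ((insert i₂ (inNbhd EG i₂ ∪ inNbhd E0 i₂) : Finset N) : Type _) => Y0 j ω))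
        inferInstance with hm₂def
    have hm₁ : m₁ ≤ mΩ := hV₁m.comap_le
    have hm₂ : m₂ ≤ mΩ := hV₂m.comap_le
    have hci : CondIndep G0 m₁ m₂ hG0 μ :=
      (condIndepFun_iff_condIndep G0 hG0 _ _ μ).mp (hdep i₁ i₂ hdis)
    -- measurability of the relevant sets in the comap σ-algebras
    have hA₁ : MeasurableSet[m₁] {ω | Y1 i₁ ω = 1} :=
      ⟨Prod.fst ⁻¹' {1}, measurable_fst (measurableSet_singleton 1), rfl⟩
    have hA₂ : MeasurableSet[m₂] {ω | Y1 i₂ ω = 1} :=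
      ⟨Prod.fst ⁻¹' {1}, measurable_fst (measurableSet_singleton 1), rfl⟩
    have hB₁ : ∀ j (hj : j ∈ (insert i₁ (inNbhd EG i₁ ∪ inNbhd E0 i₁) : Finset N)),
        MeasurableSet[m₁] {ω | Y0 j ω = 1} :=
      fun j hj => ⟨(fun p : ℝ × (((insert i₁ (inNbhd EG i₁ ∪ inNbhd E0 i₁) : Finset N) :
          Type _) → ℝ) => p.2 ⟨j, hj⟩) ⁻¹' {1},
        ((measurable_pi_apply _).comp measurable_snd) (measurableSet_singleton 1), rfl⟩
    have hB₂ : ∀ j (hj : j ∈ (insert i₂ (inNbhd EG i₂ ∪ inNbhd E0 i₂) : Finset N)),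
        MeasurableSet[m₂] {ω | Y0 j ω = 1} :=
      fun j hj => ⟨(fun p : ℝ × (((insert i₂ (inNbhd EG i₂ ∪ inNbhd E0 i₂) : Finset N) :
          Type _) → ℝ) => p.2 ⟨j, hj⟩) ⁻¹' {1},
        ((measurable_pi_apply _).comp measurable_snd) (measurableSet_singleton 1), rfl⟩
    -- indicator representations
    have hY1ind : ∀ i ω, Y1 i ω = ({ω | Y1 i ω = 1}).indicator (fun _ => (1:ℝ)) ω := by
      intro i ω
      rcases hY1b i ω with h | h <;>
        simp [Set.indicator_apply, Set.mem_setOf_eq, h]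
    have hY0ind : ∀ j ω, Y0 j ω = ({ω | Y0 j ω = 1}).indicator (fun _ => (1:ℝ)) ω := by
      intro j ω
      rcases hY0b j ω with h | h <;>
        simp [Set.indicator_apply, Set.mem_setOf_eq, h]
    -- rewrite products into sums
    have e₁ : (fun ω => (Y1 i₁ ω - (μ[Y1 i₁|G]) ω)
          * ∑ j ∈ inNbhd EG i₁, (Y0 j ω - (μ[Y0 j|G]) ω))
        = fun ω => ∑ j ∈ inNbhd EG i₁,
            (Y1 i₁ ω - (μ[Y1 i₁|G]) ω) * (Y0 j ω - (μ[Y0 j|G]) ω) :=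
      funext fun ω => Finset.mul_sum _ _ _
    have e₂ : (fun ω => (Y1 i₂ ω - (μ[Y1 i₂|G]) ω)
          * ∑ j ∈ inNbhd EG i₂, (Y0 j ω - (μ[Y0 j|G]) ω))
        = fun ω => ∑ j ∈ inNbhd EG i₂,
            (Y1 i₂ ω - (μ[Y1 i₂|G]) ω) * (Y0 j ω - (μ[Y0 j|G]) ω) :=
      funext fun ω => Finset.mul_sum _ _ _
    have hstep : μ[fun ω => (∑ j ∈ inNbhd EG i₁,
          (Y1 i₁ ω - (μ[Y1 i₁|G]) ω) * (Y0 j ω - (μ[Y0 j|G]) ω))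
        * (∑ j ∈ inNbhd EG i₂,
          (Y1 i₂ ω - (μ[Y1 i₂|G]) ω) * (Y0 j ω - (μ[Y0 j|G]) ω))|G0]
        =ᵐ[μ] fun ω =>
          (μ[fun ω => ∑ j ∈ inNbhd EG i₁,
              (Y1 i₁ ω - (μ[Y1 i₁|G]) ω) * (Y0 j ω - (μ[Y0 j|G]) ω)|G0]) ω
            * (μ[fun ω => ∑ j ∈ inNbhd EG i₂,
              (Y1 i₂ ω - (μ[Y1 i₂|G]) ω) * (Y0 j ω - (μ[Y0 j|G]) ω)|G0]) ω := by
      refine sumFactor (inNbhd EG i₁) (inNbhd EG i₂)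
        (fun j ω => (Y1 i₁ ω - (μ[Y1 i₁|G]) ω) * (Y0 j ω - (μ[Y0 j|G]) ω))
        (fun j ω => (Y1 i₂ ω - (μ[Y1 i₂|G]) ω) * (Y0 j ω - (μ[Y0 j|G]) ω))
        ?_ ?_ ?_ ?_
      · intro j _
        refine myIntegrable (((hY1m i₁).sub (hc_m i₁)).mul
          ((hY0m j).sub (hd_m j))).aestronglyMeasurable (C := 1) ?_
        filter_upwards [hε1b i₁, hε0b j] with ω h1 h2
        calc |(Y1 i₁ ω - (μ[Y1 i₁|G]) ω) * (Y0 j ω - (μ[Y0 j|G]) ω)|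
            = |Y1 i₁ ω - (μ[Y1 i₁|G]) ω| * |Y0 j ω - (μ[Y0 j|G]) ω| := abs_mul _ _
          _ ≤ 1 * 1 := mul_le_mul h1 h2 (abs_nonneg _) zero_le_one
          _ = 1 := one_mul 1
      · intro j _
        refine myIntegrable (((hY1m i₂).sub (hc_m i₂)).mul
          ((hY0m j).sub (hd_m j))).aestronglyMeasurable (C := 1) ?_
        filter_upwards [hε1b i₂, hε0b j] with ω h1 h2
        calc |(Y1 i₂ ω - (μ[Y1 i₂|G]) ω) * (Y0 j ω - (μ[Y0 j|G]) ω)|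
            = |Y1 i₂ ω - (μ[Y1 i₂|G]) ω| * |Y0 j ω - (μ[Y0 j|G]) ω| := abs_mul _ _
          _ ≤ 1 * 1 := mul_le_mul h1 h2 (abs_nonneg _) zero_le_one
          _ = 1 := one_mul 1
      · intro p hp
        refine myIntegrable ((((hY1m i₁).sub (hc_m i₁)).mul
          ((hY0m p.1).sub (hd_m p.1))).mul (((hY1m i₂).sub (hc_m i₂)).mul
          ((hY0m p.2).sub (hd_m p.2)))).aestronglyMeasurable (C := 1) ?_
        filter_upwards [hε1b i₁, hε0b p.1, hε1b i₂, hε0b p.2] with ω h1 h2 h3 h4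
        have e1 : |(Y1 i₁ ω - (μ[Y1 i₁|G]) ω) * (Y0 p.1 ω - (μ[Y0 p.1|G]) ω)| ≤ 1 := by
          calc |(Y1 i₁ ω - (μ[Y1 i₁|G]) ω) * (Y0 p.1 ω - (μ[Y0 p.1|G]) ω)|
              = |Y1 i₁ ω - (μ[Y1 i₁|G]) ω| * |Y0 p.1 ω - (μ[Y0 p.1|G]) ω| := abs_mul _ _
            _ ≤ 1 * 1 := mul_le_mul h1 h2 (abs_nonneg _) zero_le_one
            _ = 1 := one_mul 1
        have e2 : |(Y1 i₂ ω - (μ[Y1 i₂|G]) ω) * (Y0 p.2 ω - (μ[Y0 p.2|G]) ω)| ≤ 1 := by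
          calc |(Y1 i₂ ω - (μ[Y1 i₂|G]) ω) * (Y0 p.2 ω - (μ[Y0 p.2|G]) ω)|
              = |Y1 i₂ ω - (μ[Y1 i₂|G]) ω| * |Y0 p.2 ω - (μ[Y0 p.2|G]) ω| := abs_mul _ _
            _ ≤ 1 * 1 := mul_le_mul h3 h4 (abs_nonneg _) zero_le_one
            _ = 1 := one_mul 1
        calc |(Y1 i₁ ω - (μ[Y1 i₁|G]) ω) * (Y0 p.1 ω - (μ[Y0 p.1|G]) ω)
              * ((Y1 i₂ ω - (μ[Y1 i₂|G]) ω) * (Y0 p.2 ω - (μ[Y0 p.2|G]) ω))|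
            = |(Y1 i₁ ω - (μ[Y1 i₁|G]) ω) * (Y0 p.1 ω - (μ[Y0 p.1|G]) ω)|
              * |(Y1 i₂ ω - (μ[Y1 i₂|G]) ω) * (Y0 p.2 ω - (μ[Y0 p.2|G]) ω)| := abs_mul _ _
          _ ≤ 1 * 1 := mul_le_mul e1 e2 (abs_nonneg _) zero_le_one
          _ = 1 := one_mul 1
      · intro p hp
        rw [Finset.mem_product] at hp
        have hj₁ : p.1 ∈ (insert i₁ (inNbhd EG i₁ ∪ inNbhd E0 i₁) : Finset N) :=
          Finset.mem_insert_of_mem (Finset.mem_union_left _ hp.1)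
        have hj₂ : p.2 ∈ (insert i₂ (inNbhd EG i₂ ∪ inNbhd E0 i₂) : Finset N) :=
          Finset.mem_insert_of_mem (Finset.mem_union_left _ hp.2)
        exact keyPair hG0 hm₁ hm₂ hci hA₁ (hB₁ p.1 hj₁) hA₂ (hB₂ p.2 hj₂)
          (hY1ind i₁) (hY0ind p.1) (hY1ind i₂) (hY0ind p.2)
          (hc_sm i₁) (hd_sm p.1) (hc_sm i₂) (hd_sm p.2)
          (hc_b i₁) (hd_b p.1) (hc_b i₂) (hd_b p.2)
    calc μ[fun ω => ((Y1 i₁ ω - (μ[Y1 i₁|G]) ω)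
            * ∑ j ∈ inNbhd EG i₁, (Y0 j ω - (μ[Y0 j|G]) ω))
          * ((Y1 i₂ ω - (μ[Y1 i₂|G]) ω)
            * ∑ j ∈ inNbhd EG i₂, (Y0 j ω - (μ[Y0 j|G]) ω))|G0]
        = μ[fun ω => (∑ j ∈ inNbhd EG i₁,
              (Y1 i₁ ω - (μ[Y1 i₁|G]) ω) * (Y0 j ω - (μ[Y0 j|G]) ω))
            * (∑ j ∈ inNbhd EG i₂,
              (Y1 i₂ ω - (μ[Y1 i₂|G]) ω) * (Y0 j ω - (μ[Y0 j|G]) ω))|G0] := by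
          have e : (fun ω => ((Y1 i₁ ω - (μ[Y1 i₁|G]) ω)
                * ∑ j ∈ inNbhd EG i₁, (Y0 j ω - (μ[Y0 j|G]) ω))
              * ((Y1 i₂ ω - (μ[Y1 i₂|G]) ω)
                * ∑ j ∈ inNbhd EG i₂, (Y0 j ω - (μ[Y0 j|G]) ω)))
              = fun ω => (∑ j ∈ inNbhd EG i₁,
                  (Y1 i₁ ω - (μ[Y1 i₁|G]) ω) * (Y0 j ω - (μ[Y0 j|G]) ω))
                * (∑ j ∈ inNbhd EG i₂,
                  (Y1 i₂ ω - (μ[Y1 i₂|G]) ω) * (Y0 j ω - (μ[Y0 j|G]) ω)) :=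
            funext fun ω => by rw [Finset.mul_sum, Finset.mul_sum]
          rw [e]
      _ =ᵐ[μ] fun ω =>
          (μ[fun ω => ∑ j ∈ inNbhd EG i₁,
              (Y1 i₁ ω - (μ[Y1 i₁|G]) ω) * (Y0 j ω - (μ[Y0 j|G]) ω)|G0]) ω
            * (μ[fun ω => ∑ j ∈ inNbhd EG i₂,
              (Y1 i₂ ω - (μ[Y1 i₂|G]) ω) * (Y0 j ω - (μ[Y0 j|G]) ω)|G0]) ω := hstep
      _ = fun ω =>
          (μ[fun ω => (Y1 i₁ ω - (μ[Y1 i₁|G]) ω)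
              * ∑ j ∈ inNbhd EG i₁, (Y0 j ω - (μ[Y0 j|G]) ω)|G0]) ω
            * (μ[fun ω => (Y1 i₂ ω - (μ[Y1 i₂|G]) ω)
              * ∑ j ∈ inNbhd EG i₂, (Y0 j ω - (μ[Y0 j|G]) ω)|G0]) ω := by
          rw [← e₁, ← e₂]
  constructor
  · -- part (i)
    intro i₁ i₂ hdis
    filter_upwards [keyI i₁ i₂ hdis] with ω hω
    simp only [condCov, Pi.zero_apply]
    rw [hω]
    ring
  · -- part (ii)
    set D : ℝ := ((Finset.univ.sup (fun i => (inNbhd EG i).card) : ℕ) : ℝ) with hDdef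
    set K : Finset (N × N) := (Finset.univ ×ˢ Finset.univ).filter (fun q : N × N => ((insert q.1 (inNbhd EG q.1 ∪ inNbhd E0 q.1)) ∩ (insert q.2 (inNbhd EG q.2 ∪ inNbhd E0 q.2))).Nonempty) with hKdef
    have hD0 : 0 ≤ D := by rw [hDdef]; exact Nat.cast_nonneg _
    have hε0all : ∀ᵐ ω ∂μ, ∀ j : N, |Y0 j ω - (μ[Y0 j|G]) ω| ≤ 1 := ae_all_iff.2 hε0b
    -- bound on each summand
    have hZabs : ∀ i : N, ∀ᵐ ω ∂μ, |(Y1 i ω - (μ[Y1 i|G]) ω) * ∑ j ∈ inNbhd EG i, (Y0 j ω - (μ[Y0 j|G]) ω)| ≤ D := by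
      intro i
      filter_upwards [hε1b i, hε0all] with ω h1 h2
      have hsum : |∑ j ∈ inNbhd EG i, (Y0 j ω - (μ[Y0 j|G]) ω)| ≤ ((inNbhd EG i).card : ℝ) := by
        calc |∑ j ∈ inNbhd EG i, (Y0 j ω - (μ[Y0 j|G]) ω)|
            ≤ ∑ j ∈ inNbhd EG i, |(Y0 j ω - (μ[Y0 j|G]) ω)| := Finset.abs_sum_le_sum_abs _ _
          _ ≤ ∑ _j ∈ inNbhd EG i, (1:ℝ) := Finset.sum_le_sum fun j _ => h2 j
          _ = ((inNbhd EG i).card : ℝ) := by simp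
      have hcard : ((inNbhd EG i).card : ℝ) ≤ D := by
        rw [hDdef]; exact_mod_cast Finset.le_sup (f := fun i => (inNbhd EG i).card) (Finset.mem_univ i)
      calc |(Y1 i ω - (μ[Y1 i|G]) ω) * ∑ j ∈ inNbhd EG i, (Y0 j ω - (μ[Y0 j|G]) ω)|
          = |(Y1 i ω - (μ[Y1 i|G]) ω)| * |∑ j ∈ inNbhd EG i, (Y0 j ω - (μ[Y0 j|G]) ω)| := abs_mul _ _
        _ ≤ 1 * D := mul_le_mul h1 (hsum.trans hcard) (abs_nonneg _) zero_le_one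
        _ = D := one_mul D
    have hZm : ∀ i : N, Measurable[mΩ] (fun ω => (Y1 i ω - (μ[Y1 i|G]) ω) * ∑ j ∈ inNbhd EG i, (Y0 j ω - (μ[Y0 j|G]) ω)) := fun i =>
      ((hY1m i).sub (hc_m i)).mul (Finset.measurable_sum _ fun j _ => (hY0m j).sub (hd_m j))
    have hZint : ∀ i : N, Integrable (fun ω => (Y1 i ω - (μ[Y1 i|G]) ω) * ∑ j ∈ inNbhd EG i, (Y0 j ω - (μ[Y0 j|G]) ω)) μ := fun i =>
      myIntegrable (hZm i).aestronglyMeasurable (hZabs i)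
    have hZZabs : ∀ p : N × N, ∀ᵐ ω ∂μ, |((Y1 p.1 ω - (μ[Y1 p.1|G]) ω) * ∑ j ∈ inNbhd EG p.1, (Y0 j ω - (μ[Y0 j|G]) ω)) * ((Y1 p.2 ω - (μ[Y1 p.2|G]) ω) * ∑ j ∈ inNbhd EG p.2, (Y0 j ω - (μ[Y0 j|G]) ω))| ≤ D ^ 2 := by
      intro p
      filter_upwards [hZabs p.1, hZabs p.2] with ω h1 h2
      calc |((Y1 p.1 ω - (μ[Y1 p.1|G]) ω) * ∑ j ∈ inNbhd EG p.1, (Y0 j ω - (μ[Y0 j|G]) ω)) * ((Y1 p.2 ω - (μ[Y1 p.2|G]) ω) * ∑ j ∈ inNbhd EG p.2, (Y0 j ω - (μ[Y0 j|G]) ω))|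
          = |(Y1 p.1 ω - (μ[Y1 p.1|G]) ω) * ∑ j ∈ inNbhd EG p.1, (Y0 j ω - (μ[Y0 j|G]) ω)| * |(Y1 p.2 ω - (μ[Y1 p.2|G]) ω) * ∑ j ∈ inNbhd EG p.2, (Y0 j ω - (μ[Y0 j|G]) ω)| := abs_mul _ _
        _ ≤ D * D := mul_le_mul h1 h2 (abs_nonneg _) hD0
        _ = D ^ 2 := (sq D).symm
    have hZZint : ∀ p : N × N, Integrable (fun ω => ((Y1 p.1 ω - (μ[Y1 p.1|G]) ω) * ∑ j ∈ inNbhd EG p.1, (Y0 j ω - (μ[Y0 j|G]) ω)) * ((Y1 p.2 ω - (μ[Y1 p.2|G]) ω) * ∑ j ∈ inNbhd EG p.2, (Y0 j ω - (μ[Y0 j|G]) ω))) μ := fun p =>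
      myIntegrable ((hZm p.1).mul (hZm p.2)).aestronglyMeasurable (hZZabs p)
    -- bounds on the total sum and its conditional expectation
    have hCN0 : 0 ≤ (Fintype.card N : ℝ) * D :=
      mul_nonneg (Nat.cast_nonneg _) hD0
    have hZSabs : ∀ᵐ ω ∂μ, |∑ i, (Y1 i ω - (μ[Y1 i|G]) ω) * ∑ j ∈ inNbhd EG i, (Y0 j ω - (μ[Y0 j|G]) ω)| ≤ (Fintype.card N : ℝ) * D := by
      filter_upwards [ae_all_iff.2 hZabs] with ω hω
      calc |∑ i, (Y1 i ω - (μ[Y1 i|G]) ω) * ∑ j ∈ inNbhd EG i, (Y0 j ω - (μ[Y0 j|G]) ω)|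
          ≤ ∑ i, |(Y1 i ω - (μ[Y1 i|G]) ω) * ∑ j ∈ inNbhd EG i, (Y0 j ω - (μ[Y0 j|G]) ω)| := Finset.abs_sum_le_sum_abs _ _
        _ ≤ ∑ _i : N, D := Finset.sum_le_sum fun i _ => hω i
        _ = (Fintype.card N : ℝ) * D := by
            rw [Finset.sum_const, nsmul_eq_mul, Finset.card_univ]
    have hZSm : Measurable[mΩ] (fun ω => ∑ i, (Y1 i ω - (μ[Y1 i|G]) ω) * ∑ j ∈ inNbhd EG i, (Y0 j ω - (μ[Y0 j|G]) ω)) :=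
      Finset.measurable_sum _ fun i _ => hZm i
    have hZSint : Integrable (fun ω => ∑ i, (Y1 i ω - (μ[Y1 i|G]) ω) * ∑ j ∈ inNbhd EG i, (Y0 j ω - (μ[Y0 j|G]) ω)) μ :=
      myIntegrable hZSm.aestronglyMeasurable hZSabs
    have hMsm : StronglyMeasurable[G0] (μ[fun ω'' => ∑ i, (Y1 i ω'' - (μ[Y1 i|G]) ω'') * ∑ j ∈ inNbhd EG i, (Y0 j ω'' - (μ[Y0 j|G]) ω'')|G0]) := stronglyMeasurable_condExp
    have hMm : Measurable[mΩ] (μ[fun ω'' => ∑ i, (Y1 i ω'' - (μ[Y1 i|G]) ω'') * ∑ j ∈ inNbhd EG i, (Y0 j ω'' - (μ[Y0 j|G]) ω'')|G0]) := (hMsm.mono hG0).measurable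
    have hMabs : ∀ᵐ ω ∂μ, |(μ[fun ω'' => ∑ i, (Y1 i ω'' - (μ[Y1 i|G]) ω'') * ∑ j ∈ inNbhd EG i, (Y0 j ω'' - (μ[Y0 j|G]) ω'')|G0]) ω| ≤ (Fintype.card N : ℝ) * D := by
      have h := ae_bdd_condExp_of_ae_bdd (m := G0) (μ := μ)
        (R := ((Fintype.card N : ℝ) * D).toNNReal)
        (f := (fun ω => ∑ i, (Y1 i ω - (μ[Y1 i|G]) ω) * ∑ j ∈ inNbhd EG i, (Y0 j ω - (μ[Y0 j|G]) ω)))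
        (by filter_upwards [hZSabs] with ω hω
            rwa [Real.coe_toNNReal _ hCN0])
      filter_upwards [h] with ω hω
      rwa [Real.coe_toNNReal _ hCN0] at hω
    -- integrability of products
    have hPPint : Integrable (fun ω => (∑ i, (Y1 i ω - (μ[Y1 i|G]) ω) * ∑ j ∈ inNbhd EG i, (Y0 j ω - (μ[Y0 j|G]) ω)) * (∑ i, (Y1 i ω - (μ[Y1 i|G]) ω) * ∑ j ∈ inNbhd EG i, (Y0 j ω - (μ[Y0 j|G]) ω))) μ := by
      refine myIntegrable (hZSm.mul hZSm).aestronglyMeasurable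
        (C := ((Fintype.card N : ℝ) * D) ^ 2) ?_
      filter_upwards [hZSabs] with ω hω
      calc |(∑ i, (Y1 i ω - (μ[Y1 i|G]) ω) * ∑ j ∈ inNbhd EG i, (Y0 j ω - (μ[Y0 j|G]) ω)) * (∑ i, (Y1 i ω - (μ[Y1 i|G]) ω) * ∑ j ∈ inNbhd EG i, (Y0 j ω - (μ[Y0 j|G]) ω))| = |(∑ i, (Y1 i ω - (μ[Y1 i|G]) ω) * ∑ j ∈ inNbhd EG i, (Y0 j ω - (μ[Y0 j|G]) ω))| * |(∑ i, (Y1 i ω - (μ[Y1 i|G]) ω) * ∑ j ∈ inNbhd EG i, (Y0 j ω - (μ[Y0 j|G]) ω))| := abs_mul _ _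
        _ ≤ ((Fintype.card N : ℝ) * D) * ((Fintype.card N : ℝ) * D) :=
            mul_le_mul hω hω (abs_nonneg _) hCN0
        _ = ((Fintype.card N : ℝ) * D) ^ 2 := (sq _).symm
    have hQQint : Integrable (fun ω => (μ[fun ω'' => ∑ i, (Y1 i ω'' - (μ[Y1 i|G]) ω'') * ∑ j ∈ inNbhd EG i, (Y0 j ω'' - (μ[Y0 j|G]) ω'')|G0]) ω * (∑ i, (Y1 i ω - (μ[Y1 i|G]) ω) * ∑ j ∈ inNbhd EG i, (Y0 j ω - (μ[Y0 j|G]) ω))) μ := by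
      refine myIntegrable (hMm.mul hZSm).aestronglyMeasurable
        (C := ((Fintype.card N : ℝ) * D) ^ 2) ?_
      filter_upwards [hMabs, hZSabs] with ω h1 h2
      calc |(μ[fun ω'' => ∑ i, (Y1 i ω'' - (μ[Y1 i|G]) ω'') * ∑ j ∈ inNbhd EG i, (Y0 j ω'' - (μ[Y0 j|G]) ω'')|G0]) ω * (∑ i, (Y1 i ω - (μ[Y1 i|G]) ω) * ∑ j ∈ inNbhd EG i, (Y0 j ω - (μ[Y0 j|G]) ω))| = |(μ[fun ω'' => ∑ i, (Y1 i ω'' - (μ[Y1 i|G]) ω'') * ∑ j ∈ inNbhd EG i, (Y0 j ω'' - (μ[Y0 j|G]) ω'')|G0]) ω| * |(∑ i, (Y1 i ω - (μ[Y1 i|G]) ω) * ∑ j ∈ inNbhd EG i, (Y0 j ω - (μ[Y0 j|G]) ω))| := abs_mul _ _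
        _ ≤ ((Fintype.card N : ℝ) * D) * ((Fintype.card N : ℝ) * D) :=
            mul_le_mul h1 h2 (abs_nonneg _) hCN0
        _ = ((Fintype.card N : ℝ) * D) ^ 2 := (sq _).symm
    have hRRint : Integrable (fun ω => (μ[fun ω'' => ∑ i, (Y1 i ω'' - (μ[Y1 i|G]) ω'') * ∑ j ∈ inNbhd EG i, (Y0 j ω'' - (μ[Y0 j|G]) ω'')|G0]) ω * (μ[fun ω'' => ∑ i, (Y1 i ω'' - (μ[Y1 i|G]) ω'') * ∑ j ∈ inNbhd EG i, (Y0 j ω'' - (μ[Y0 j|G]) ω'')|G0]) ω) μ := by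
      refine myIntegrable (hMm.mul hMm).aestronglyMeasurable
        (C := ((Fintype.card N : ℝ) * D) ^ 2) ?_
      filter_upwards [hMabs] with ω h1
      calc |(μ[fun ω'' => ∑ i, (Y1 i ω'' - (μ[Y1 i|G]) ω'') * ∑ j ∈ inNbhd EG i, (Y0 j ω'' - (μ[Y0 j|G]) ω'')|G0]) ω * (μ[fun ω'' => ∑ i, (Y1 i ω'' - (μ[Y1 i|G]) ω'') * ∑ j ∈ inNbhd EG i, (Y0 j ω'' - (μ[Y0 j|G]) ω'')|G0]) ω| = |(μ[fun ω'' => ∑ i, (Y1 i ω'' - (μ[Y1 i|G]) ω'') * ∑ j ∈ inNbhd EG i, (Y0 j ω'' - (μ[Y0 j|G]) ω'')|G0]) ω| * |(μ[fun ω'' => ∑ i, (Y1 i ω'' - (μ[Y1 i|G]) ω'') * ∑ j ∈ inNbhd EG i, (Y0 j ω'' - (μ[Y0 j|G]) ω'')|G0]) ω| := abs_mul _ _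
        _ ≤ ((Fintype.card N : ℝ) * D) * ((Fintype.card N : ℝ) * D) :=
            mul_le_mul h1 h1 (abs_nonneg _) hCN0
        _ = ((Fintype.card N : ℝ) * D) ^ 2 := (sq _).symm
    -- variance expansion
    have hQval : μ[fun ω => (μ[fun ω'' => ∑ i, (Y1 i ω'' - (μ[Y1 i|G]) ω'') * ∑ j ∈ inNbhd EG i, (Y0 j ω'' - (μ[Y0 j|G]) ω'')|G0]) ω * (∑ i, (Y1 i ω - (μ[Y1 i|G]) ω) * ∑ j ∈ inNbhd EG i, (Y0 j ω - (μ[Y0 j|G]) ω))|G0]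
        =ᵐ[μ] fun ω => (μ[fun ω'' => ∑ i, (Y1 i ω'' - (μ[Y1 i|G]) ω'') * ∑ j ∈ inNbhd EG i, (Y0 j ω'' - (μ[Y0 j|G]) ω'')|G0]) ω * (μ[fun ω'' => ∑ i, (Y1 i ω'' - (μ[Y1 i|G]) ω'') * ∑ j ∈ inNbhd EG i, (Y0 j ω'' - (μ[Y0 j|G]) ω'')|G0]) ω :=
      condExp_mul_of_stronglyMeasurable_left hMsm hQQint hZSint
    have hRval : μ[fun ω => (μ[fun ω'' => ∑ i, (Y1 i ω'' - (μ[Y1 i|G]) ω'') * ∑ j ∈ inNbhd EG i, (Y0 j ω'' - (μ[Y0 j|G]) ω'')|G0]) ω * (μ[fun ω'' => ∑ i, (Y1 i ω'' - (μ[Y1 i|G]) ω'') * ∑ j ∈ inNbhd EG i, (Y0 j ω'' - (μ[Y0 j|G]) ω'')|G0]) ω|G0]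
        = fun ω => (μ[fun ω'' => ∑ i, (Y1 i ω'' - (μ[Y1 i|G]) ω'') * ∑ j ∈ inNbhd EG i, (Y0 j ω'' - (μ[Y0 j|G]) ω'')|G0]) ω * (μ[fun ω'' => ∑ i, (Y1 i ω'' - (μ[Y1 i|G]) ω'') * ∑ j ∈ inNbhd EG i, (Y0 j ω'' - (μ[Y0 j|G]) ω'')|G0]) ω :=
      condExp_of_stronglyMeasurable hG0 (hMsm.mul hMsm) hRRint
    have hsq : (fun ω' => ((∑ i, (Y1 i ω' - (μ[Y1 i|G]) ω') * ∑ j ∈ inNbhd EG i, (Y0 j ω' - (μ[Y0 j|G]) ω')) - (μ[fun ω'' => ∑ i, (Y1 i ω'' - (μ[Y1 i|G]) ω'') * ∑ j ∈ inNbhd EG i, (Y0 j ω'' - (μ[Y0 j|G]) ω'')|G0]) ω') ^ 2)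
        = (fun ω => (∑ i, (Y1 i ω - (μ[Y1 i|G]) ω) * ∑ j ∈ inNbhd EG i, (Y0 j ω - (μ[Y0 j|G]) ω)) * (∑ i, (Y1 i ω - (μ[Y1 i|G]) ω) * ∑ j ∈ inNbhd EG i, (Y0 j ω - (μ[Y0 j|G]) ω)) - (μ[fun ω'' => ∑ i, (Y1 i ω'' - (μ[Y1 i|G]) ω'') * ∑ j ∈ inNbhd EG i, (Y0 j ω'' - (μ[Y0 j|G]) ω'')|G0]) ω * (∑ i, (Y1 i ω - (μ[Y1 i|G]) ω) * ∑ j ∈ inNbhd EG i, (Y0 j ω - (μ[Y0 j|G]) ω)))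
          - (fun ω => (μ[fun ω'' => ∑ i, (Y1 i ω'' - (μ[Y1 i|G]) ω'') * ∑ j ∈ inNbhd EG i, (Y0 j ω'' - (μ[Y0 j|G]) ω'')|G0]) ω * (∑ i, (Y1 i ω - (μ[Y1 i|G]) ω) * ∑ j ∈ inNbhd EG i, (Y0 j ω - (μ[Y0 j|G]) ω)) - (μ[fun ω'' => ∑ i, (Y1 i ω'' - (μ[Y1 i|G]) ω'') * ∑ j ∈ inNbhd EG i, (Y0 j ω'' - (μ[Y0 j|G]) ω'')|G0]) ω * (μ[fun ω'' => ∑ i, (Y1 i ω'' - (μ[Y1 i|G]) ω'') * ∑ j ∈ inNbhd EG i, (Y0 j ω'' - (μ[Y0 j|G]) ω'')|G0]) ω) := by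
      funext ω
      simp only [Pi.sub_apply]
      ring
    have hsub1 : μ[(fun ω => (∑ i, (Y1 i ω - (μ[Y1 i|G]) ω) * ∑ j ∈ inNbhd EG i, (Y0 j ω - (μ[Y0 j|G]) ω)) * (∑ i, (Y1 i ω - (μ[Y1 i|G]) ω) * ∑ j ∈ inNbhd EG i, (Y0 j ω - (μ[Y0 j|G]) ω)) - (μ[fun ω'' => ∑ i, (Y1 i ω'' - (μ[Y1 i|G]) ω'') * ∑ j ∈ inNbhd EG i, (Y0 j ω'' - (μ[Y0 j|G]) ω'')|G0]) ω * (∑ i, (Y1 i ω - (μ[Y1 i|G]) ω) * ∑ j ∈ inNbhd EG i, (Y0 j ω - (μ[Y0 j|G]) ω)))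
          - (fun ω => (μ[fun ω'' => ∑ i, (Y1 i ω'' - (μ[Y1 i|G]) ω'') * ∑ j ∈ inNbhd EG i, (Y0 j ω'' - (μ[Y0 j|G]) ω'')|G0]) ω * (∑ i, (Y1 i ω - (μ[Y1 i|G]) ω) * ∑ j ∈ inNbhd EG i, (Y0 j ω - (μ[Y0 j|G]) ω)) - (μ[fun ω'' => ∑ i, (Y1 i ω'' - (μ[Y1 i|G]) ω'') * ∑ j ∈ inNbhd EG i, (Y0 j ω'' - (μ[Y0 j|G]) ω'')|G0]) ω * (μ[fun ω'' => ∑ i, (Y1 i ω'' - (μ[Y1 i|G]) ω'') * ∑ j ∈ inNbhd EG i, (Y0 j ω'' - (μ[Y0 j|G]) ω'')|G0]) ω)|G0]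
        =ᵐ[μ] μ[fun ω => (∑ i, (Y1 i ω - (μ[Y1 i|G]) ω) * ∑ j ∈ inNbhd EG i, (Y0 j ω - (μ[Y0 j|G]) ω)) * (∑ i, (Y1 i ω - (μ[Y1 i|G]) ω) * ∑ j ∈ inNbhd EG i, (Y0 j ω - (μ[Y0 j|G]) ω)) - (μ[fun ω'' => ∑ i, (Y1 i ω'' - (μ[Y1 i|G]) ω'') * ∑ j ∈ inNbhd EG i, (Y0 j ω'' - (μ[Y0 j|G]) ω'')|G0]) ω * (∑ i, (Y1 i ω - (μ[Y1 i|G]) ω) * ∑ j ∈ inNbhd EG i, (Y0 j ω - (μ[Y0 j|G]) ω))|G0]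
          - μ[fun ω => (μ[fun ω'' => ∑ i, (Y1 i ω'' - (μ[Y1 i|G]) ω'') * ∑ j ∈ inNbhd EG i, (Y0 j ω'' - (μ[Y0 j|G]) ω'')|G0]) ω * (∑ i, (Y1 i ω - (μ[Y1 i|G]) ω) * ∑ j ∈ inNbhd EG i, (Y0 j ω - (μ[Y0 j|G]) ω)) - (μ[fun ω'' => ∑ i, (Y1 i ω'' - (μ[Y1 i|G]) ω'') * ∑ j ∈ inNbhd EG i, (Y0 j ω'' - (μ[Y0 j|G]) ω'')|G0]) ω * (μ[fun ω'' => ∑ i, (Y1 i ω'' - (μ[Y1 i|G]) ω'') * ∑ j ∈ inNbhd EG i, (Y0 j ω'' - (μ[Y0 j|G]) ω'')|G0]) ω|G0] :=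
      condExp_sub (hPPint.sub hQQint) (hQQint.sub hRRint) _
    have hsub2 : μ[fun ω => (∑ i, (Y1 i ω - (μ[Y1 i|G]) ω) * ∑ j ∈ inNbhd EG i, (Y0 j ω - (μ[Y0 j|G]) ω)) * (∑ i, (Y1 i ω - (μ[Y1 i|G]) ω) * ∑ j ∈ inNbhd EG i, (Y0 j ω - (μ[Y0 j|G]) ω)) - (μ[fun ω'' => ∑ i, (Y1 i ω'' - (μ[Y1 i|G]) ω'') * ∑ j ∈ inNbhd EG i, (Y0 j ω'' - (μ[Y0 j|G]) ω'')|G0]) ω * (∑ i, (Y1 i ω - (μ[Y1 i|G]) ω) * ∑ j ∈ inNbhd EG i, (Y0 j ω - (μ[Y0 j|G]) ω))|G0]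
        =ᵐ[μ] μ[fun ω => (∑ i, (Y1 i ω - (μ[Y1 i|G]) ω) * ∑ j ∈ inNbhd EG i, (Y0 j ω - (μ[Y0 j|G]) ω)) * (∑ i, (Y1 i ω - (μ[Y1 i|G]) ω) * ∑ j ∈ inNbhd EG i, (Y0 j ω - (μ[Y0 j|G]) ω))|G0] - μ[fun ω => (μ[fun ω'' => ∑ i, (Y1 i ω'' - (μ[Y1 i|G]) ω'') * ∑ j ∈ inNbhd EG i, (Y0 j ω'' - (μ[Y0 j|G]) ω'')|G0]) ω * (∑ i, (Y1 i ω - (μ[Y1 i|G]) ω) * ∑ j ∈ inNbhd EG i, (Y0 j ω - (μ[Y0 j|G]) ω))|G0] :=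
      condExp_sub hPPint hQQint _
    have hsub3 : μ[fun ω => (μ[fun ω'' => ∑ i, (Y1 i ω'' - (μ[Y1 i|G]) ω'') * ∑ j ∈ inNbhd EG i, (Y0 j ω'' - (μ[Y0 j|G]) ω'')|G0]) ω * (∑ i, (Y1 i ω - (μ[Y1 i|G]) ω) * ∑ j ∈ inNbhd EG i, (Y0 j ω - (μ[Y0 j|G]) ω)) - (μ[fun ω'' => ∑ i, (Y1 i ω'' - (μ[Y1 i|G]) ω'') * ∑ j ∈ inNbhd EG i, (Y0 j ω'' - (μ[Y0 j|G]) ω'')|G0]) ω * (μ[fun ω'' => ∑ i, (Y1 i ω'' - (μ[Y1 i|G]) ω'') * ∑ j ∈ inNbhd EG i, (Y0 j ω'' - (μ[Y0 j|G]) ω'')|G0]) ω|G0]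
        =ᵐ[μ] μ[fun ω => (μ[fun ω'' => ∑ i, (Y1 i ω'' - (μ[Y1 i|G]) ω'') * ∑ j ∈ inNbhd EG i, (Y0 j ω'' - (μ[Y0 j|G]) ω'')|G0]) ω * (∑ i, (Y1 i ω - (μ[Y1 i|G]) ω) * ∑ j ∈ inNbhd EG i, (Y0 j ω - (μ[Y0 j|G]) ω))|G0] - μ[fun ω => (μ[fun ω'' => ∑ i, (Y1 i ω'' - (μ[Y1 i|G]) ω'') * ∑ j ∈ inNbhd EG i, (Y0 j ω'' - (μ[Y0 j|G]) ω'')|G0]) ω * (μ[fun ω'' => ∑ i, (Y1 i ω'' - (μ[Y1 i|G]) ω'') * ∑ j ∈ inNbhd EG i, (Y0 j ω'' - (μ[Y0 j|G]) ω'')|G0]) ω|G0] :=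
      condExp_sub hQQint hRRint _
    have hvar : μ[fun ω' => ((∑ i, (Y1 i ω' - (μ[Y1 i|G]) ω') * ∑ j ∈ inNbhd EG i, (Y0 j ω' - (μ[Y0 j|G]) ω')) - (μ[fun ω'' => ∑ i, (Y1 i ω'' - (μ[Y1 i|G]) ω'') * ∑ j ∈ inNbhd EG i, (Y0 j ω'' - (μ[Y0 j|G]) ω'')|G0]) ω') ^ 2|G0]
        =ᵐ[μ] fun ω => (μ[fun ω => (∑ i, (Y1 i ω - (μ[Y1 i|G]) ω) * ∑ j ∈ inNbhd EG i, (Y0 j ω - (μ[Y0 j|G]) ω)) * (∑ i, (Y1 i ω - (μ[Y1 i|G]) ω) * ∑ j ∈ inNbhd EG i, (Y0 j ω - (μ[Y0 j|G]) ω))|G0]) ω - (μ[fun ω'' => ∑ i, (Y1 i ω'' - (μ[Y1 i|G]) ω'') * ∑ j ∈ inNbhd EG i, (Y0 j ω'' - (μ[Y0 j|G]) ω'')|G0]) ω * (μ[fun ω'' => ∑ i, (Y1 i ω'' - (μ[Y1 i|G]) ω'') * ∑ j ∈ inNbhd EG i, (Y0 j ω'' - (μ[Y0 j|G]) ω'')|G0])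 ω := by
      rw [hsq]
      refine hsub1.trans ?_
      filter_upwards [hsub2, hsub3, hQval] with ω h2 h3 hq
      have hr : (μ[fun ω => (μ[fun ω'' => ∑ i, (Y1 i ω'' - (μ[Y1 i|G]) ω'') * ∑ j ∈ inNbhd EG i, (Y0 j ω'' - (μ[Y0 j|G]) ω'')|G0]) ω * (μ[fun ω'' => ∑ i, (Y1 i ω'' - (μ[Y1 i|G]) ω'') * ∑ j ∈ inNbhd EG i, (Y0 j ω'' - (μ[Y0 j|G]) ω'')|G0]) ω|G0]) ω = (μ[fun ω'' => ∑ i, (Y1 i ω'' - (μ[Y1 i|G]) ω'') * ∑ j ∈ inNbhd EG i, (Y0 j ω'' - (μ[Y0 j|G]) ω'')|G0]) ω * (μ[fun ω'' => ∑ i, (Y1 i ω'' - (μ[Y1 i|G]) ω'') * ∑ j ∈ inNbhd EG i, (Y0 j ω'' - (μ[Y0 j|G]) ω'')|G0]) ω := by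
        rw [hRval]
      simp only [Pi.sub_apply] at h2 h3 ⊢
      rw [h2, h3, hq, hr]
      ring
    -- sums of conditional expectations
    have hPsum : μ[fun ω => (∑ i, (Y1 i ω - (μ[Y1 i|G]) ω) * ∑ j ∈ inNbhd EG i, (Y0 j ω - (μ[Y0 j|G]) ω)) * (∑ i, (Y1 i ω - (μ[Y1 i|G]) ω) * ∑ j ∈ inNbhd EG i, (Y0 j ω - (μ[Y0 j|G]) ω))|G0]
        =ᵐ[μ] fun ω => ∑ p ∈ Finset.univ ×ˢ Finset.univ,
          (μ[(fun ω => ((Y1 p.1 ω - (μ[Y1 p.1|G]) ω) * ∑ j ∈ inNbhd EG p.1, (Y0 j ω - (μ[Y0 j|G]) ω)) * ((Y1 p.2 ω - (μ[Y1 p.2|G]) ω) * ∑ j ∈ inNbhd EG p.2, (Y0 j ω - (μ[Y0 j|G]) ω)))|G0]) ω := by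
      have e : (fun ω => (∑ i, (Y1 i ω - (μ[Y1 i|G]) ω) * ∑ j ∈ inNbhd EG i, (Y0 j ω - (μ[Y0 j|G]) ω)) * (∑ i, (Y1 i ω - (μ[Y1 i|G]) ω) * ∑ j ∈ inNbhd EG i, (Y0 j ω - (μ[Y0 j|G]) ω)))
          = fun ω => ∑ p ∈ Finset.univ ×ˢ Finset.univ, ((Y1 p.1 ω - (μ[Y1 p.1|G]) ω) * ∑ j ∈ inNbhd EG p.1, (Y0 j ω - (μ[Y0 j|G]) ω)) * ((Y1 p.2 ω - (μ[Y1 p.2|G]) ω) * ∑ j ∈ inNbhd EG p.2, (Y0 j ω - (μ[Y0 j|G]) ω)) := by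
        funext ω
        rw [Finset.sum_mul_sum, Finset.sum_product]
      rw [e, funSumF]
      refine (condExp_finsetSum (fun p _ => hZZint p) _).trans ?_
      rw [funSumF (Finset.univ ×ˢ Finset.univ) fun p : N × N => μ[(fun ω => ((Y1 p.1 ω - (μ[Y1 p.1|G]) ω) * ∑ j ∈ inNbhd EG p.1, (Y0 j ω - (μ[Y0 j|G]) ω)) * ((Y1 p.2 ω - (μ[Y1 p.2|G]) ω) * ∑ j ∈ inNbhd EG p.2, (Y0 j ω - (μ[Y0 j|G]) ω)))|G0]]
    have hMsum : (μ[fun ω'' => ∑ i, (Y1 i ω'' - (μ[Y1 i|G]) ω'') * ∑ j ∈ inNbhd EG i, (Y0 j ω'' - (μ[Y0 j|G]) ω'')|G0]) =ᵐ[μ] fun ω => ∑ i, (μ[(fun ω => (Y1 i ω - (μ[Y1 i|G]) ω) * ∑ j ∈ inNbhd EG i, (Y0 j ω - (μ[Y0 j|G]) ω))|G0]) ω := by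
      rw [funSumF Finset.univ fun i ω => (Y1 i ω - (μ[Y1 i|G]) ω) * ∑ j ∈ inNbhd EG i, (Y0 j ω - (μ[Y0 j|G]) ω)]
      refine (condExp_finsetSum (fun i _ => hZint i) _).trans ?_
      rw [funSumF Finset.univ fun i => μ[(fun ω => (Y1 i ω - (μ[Y1 i|G]) ω) * ∑ j ∈ inNbhd EG i, (Y0 j ω - (μ[Y0 j|G]) ω))|G0]]
    -- per-pair covariance bound
    have hZcondabs : ∀ i : N, ∀ᵐ ω ∂μ, |(μ[(fun ω => (Y1 i ω - (μ[Y1 i|G]) ω) * ∑ j ∈ inNbhd EG i, (Y0 j ω - (μ[Y0 j|G]) ω))|G0]) ω| ≤ D := by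
      intro i
      have h := ae_bdd_condExp_of_ae_bdd (m := G0) (μ := μ) (R := D.toNNReal)
        (f := (fun ω => (Y1 i ω - (μ[Y1 i|G]) ω) * ∑ j ∈ inNbhd EG i, (Y0 j ω - (μ[Y0 j|G]) ω)))
        (by filter_upwards [hZabs i] with ω hω
            rwa [Real.coe_toNNReal _ hD0])
      filter_upwards [h] with ω hω
      rwa [Real.coe_toNNReal _ hD0] at hω
    have hpair : ∀ p : N × N, ∀ᵐ ω ∂μ,
        (μ[(fun ω => ((Y1 p.1 ω - (μ[Y1 p.1|G]) ω) * ∑ j ∈ inNbhd EG p.1, (Y0 j ω - (μ[Y0 j|G]) ω)) * ((Y1 p.2 ω - (μ[Y1 p.2|G]) ω) * ∑ j ∈ inNbhd EG p.2, (Y0 j ω - (μ[Y0 j|G]) ω)))|G0]) ω - (μ[(fun ω => (Y1 p.1 ω - (μ[Y1 p.1|G]) ω) * ∑ j ∈ inNbhd EG p.1, (Y0 j ω - (μ[Y0 j|G]) ω))|G0]) ω * (μ[(fun ω => (Y1 p.2 ω - (μ[Y1 p.2|G]) ω) * ∑ j ∈ inNbhd EG p.2, (Y0 j ω - (μ[Y0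 j|G]) ω))|G0]) ω
          ≤ if ((insert p.1 (inNbhd EG p.1 ∪ inNbhd E0 p.1)) ∩ (insert p.2 (inNbhd EG p.2 ∪ inNbhd E0 p.2))).Nonempty then 2 * D ^ 2 else 0 := by
      intro p
      by_cases hcase : ((insert p.1 (inNbhd EG p.1 ∪ inNbhd E0 p.1)) ∩ (insert p.2 (inNbhd EG p.2 ∪ inNbhd E0 p.2))).Nonempty
      · simp only [if_pos hcase]
        have h1 : ∀ᵐ ω ∂μ, |(μ[(fun ω => ((Y1 p.1 ω - (μ[Y1 p.1|G]) ω) * ∑ j ∈ inNbhd EG p.1, (Y0 j ω - (μ[Y0 j|G]) ω)) * ((Y1 p.2 ω - (μ[Y1 p.2|G]) ω) * ∑ j ∈ inNbhd EG p.2, (Y0 j ω - (μ[Y0 j|G]) ω)))|G0]) ω| ≤ D ^ 2 := by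
          have h := ae_bdd_condExp_of_ae_bdd (m := G0) (μ := μ) (R := (D ^ 2).toNNReal)
            (f := (fun ω => ((Y1 p.1 ω - (μ[Y1 p.1|G]) ω) * ∑ j ∈ inNbhd EG p.1, (Y0 j ω - (μ[Y0 j|G]) ω)) * ((Y1 p.2 ω - (μ[Y1 p.2|G]) ω) * ∑ j ∈ inNbhd EG p.2, (Y0 j ω - (μ[Y0 j|G]) ω))))
            (by filter_upwards [hZZabs p] with ω hω
                rwa [Real.coe_toNNReal _ (sq_nonneg D)])
          filter_upwards [h] with ω hω
          rwa [Real.coe_toNNReal _ (sq_nonneg D)] at hω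
        filter_upwards [h1, hZcondabs p.1, hZcondabs p.2] with ω e1 e2 e3
        have e4 : (μ[(fun ω => ((Y1 p.1 ω - (μ[Y1 p.1|G]) ω) * ∑ j ∈ inNbhd EG p.1, (Y0 j ω - (μ[Y0 j|G]) ω)) * ((Y1 p.2 ω - (μ[Y1 p.2|G]) ω) * ∑ j ∈ inNbhd EG p.2, (Y0 j ω - (μ[Y0 j|G]) ω)))|G0]) ω ≤ D ^ 2 := (abs_le.1 e1).2
        have e5 : |(μ[(fun ω => (Y1 p.1 ω - (μ[Y1 p.1|G]) ω) * ∑ j ∈ inNbhd EG p.1, (Y0 j ω - (μ[Y0 j|G]) ω))|G0]) ω * (μ[(fun ω => (Y1 p.2 ω - (μ[Y1 p.2|G]) ω) * ∑ j ∈ inNbhd EG p.2, (Y0 j ω - (μ[Y0 j|G]) ω))|G0]) ω| ≤ D ^ 2 := by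
          calc |(μ[(fun ω => (Y1 p.1 ω - (μ[Y1 p.1|G]) ω) * ∑ j ∈ inNbhd EG p.1, (Y0 j ω - (μ[Y0 j|G]) ω))|G0]) ω * (μ[(fun ω => (Y1 p.2 ω - (μ[Y1 p.2|G]) ω) * ∑ j ∈ inNbhd EG p.2, (Y0 j ω - (μ[Y0 j|G]) ω))|G0]) ω|
              = |(μ[(fun ω => (Y1 p.1 ω - (μ[Y1 p.1|G]) ω) * ∑ j ∈ inNbhd EG p.1, (Y0 j ω - (μ[Y0 j|G]) ω))|G0]) ω| * |(μ[(fun ω => (Y1 p.2 ω - (μ[Y1 p.2|G]) ω) * ∑ j ∈ inNbhd EG p.2, (Y0 j ω - (μ[Y0 j|G]) ω))|G0]) ω| := abs_mul _ _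
            _ ≤ D * D := mul_le_mul e2 e3 (abs_nonneg _) hD0
            _ = D ^ 2 := (sq D).symm
        have e6 := (abs_le.1 e5).1
        linarith
      · have hEq : (insert p.1 (inNbhd EG p.1 ∪ inNbhd E0 p.1)) ∩ (insert p.2 (inNbhd EG p.2 ∪ inNbhd E0 p.2)) = ∅ :=
          Finset.not_nonempty_iff_eq_empty.1 hcase
        simp only [if_neg hcase]
        filter_upwards [keyI p.1 p.2 hEq] with ω hω
        rw [hω]
        simp
    -- put everything together
    filter_upwards [hvar, hPsum, hMsum, ae_all_iff.2 hpair] with ω h1 h2 h3 h4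
    rw [h1, h2, h3]
    have e : (∑ i, (μ[(fun ω => (Y1 i ω - (μ[Y1 i|G]) ω) * ∑ j ∈ inNbhd EG i, (Y0 j ω - (μ[Y0 j|G]) ω))|G0]) ω) * (∑ i, (μ[(fun ω => (Y1 i ω - (μ[Y1 i|G]) ω) * ∑ j ∈ inNbhd EG i, (Y0 j ω - (μ[Y0 j|G]) ω))|G0]) ω)
        = ∑ p ∈ Finset.univ ×ˢ Finset.univ,
            (μ[(fun ω => (Y1 p.1 ω - (μ[Y1 p.1|G]) ω) * ∑ j ∈ inNbhd EG p.1, (Y0 j ω - (μ[Y0 j|G]) ω))|G0]) ω * (μ[(fun ω => (Y1 p.2 ω - (μ[Y1 p.2|G]) ω) * ∑ j ∈ inNbhd EG p.2, (Y0 j ω - (μ[Y0 j|G]) ω))|G0]) ω := by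
      rw [Finset.sum_mul_sum, Finset.sum_product]
    rw [e, ← Finset.sum_sub_distrib]
    calc ∑ p ∈ Finset.univ ×ˢ Finset.univ,
          ((μ[(fun ω => ((Y1 p.1 ω - (μ[Y1 p.1|G]) ω) * ∑ j ∈ inNbhd EG p.1, (Y0 j ω - (μ[Y0 j|G]) ω)) * ((Y1 p.2 ω - (μ[Y1 p.2|G]) ω) * ∑ j ∈ inNbhd EG p.2, (Y0 j ω - (μ[Y0 j|G]) ω)))|G0]) ω - (μ[(fun ω => (Y1 p.1 ω - (μ[Y1 p.1|G]) ω) * ∑ j ∈ inNbhd EG p.1, (Y0 j ω - (μ[Y0 j|G]) ω))|G0]) ω * (μ[(fun ω => (Y1 p.2 ω - (μ[Y1 p.2|G]) ω) * ∑ j ∈ inNbhd EG p.2, (Y0 j ω - (μ[Y0 j|G]) ω))|G0]) ω)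
        ≤ ∑ p ∈ Finset.univ ×ˢ Finset.univ,
            (if ((insert p.1 (inNbhd EG p.1 ∪ inNbhd E0 p.1)) ∩ (insert p.2 (inNbhd EG p.2 ∪ inNbhd E0 p.2))).Nonempty then 2 * D ^ 2 else 0) :=
          Finset.sum_le_sum fun p _ => h4 p
      _ = ∑ _p ∈ K, (2 * D ^ 2) := (Finset.sum_filter _ _).symm
      _ = 2 * D ^ 2 * (K.card : ℝ) := by
          rw [Finset.sum_const, nsmul_eq_mul]
          ring
end

section
/- Let N be a finite set of n units, ℋ a sub-σ-algebra, and let G∘ = (N, E∘) and G = (N, E_G) be directed graphs without self-loops with in-neighborhoods N∘(i) and N_G(i). Suppose Y_{j,0}, Y_{i,1} are {0,1}-valued random variables, and for each ij ∈ E∘ there are {0,1}-valued random variables Y*_{ij}(1), Y*_{ij}(0) satisfying Y_{i,1}·Y_{j,0} = Y*_{ij}(1)·Y_{j,0} and Y_{i,1}·(1−Y_{j,0}) = Y*_{ij}(0)·(1−Y_{j,0}) almost surely, with (Y*_{ij}(1), Y*_{ij}(0)) conditionally independent of Y_{j,0} given ℋ. Assume: (a) for every ij ∈ E_G \ E∘,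 Cov(Y_{i,1}, Y_{j,0} | ℋ) = 0 almost surely; (b) for every ij ∈ E∘ \ E_G, Cov(Y_{i,1}, Y_{j,0} | ℋ) ≥ 0 almost surely; (c) v² = (1/n)Σ_{j∈N} μ_{j,0}(1−μ_{j,0}) > 0 almost surely, where μ_{j,0} = E[Y_{j,0}|ℋ]. Then for every δ > 0, almost surely, D − C_G ≥ (δ/(n v²)) · Σ_{i∈N} |{ j ∈ N∘(i) \ N_G(i) : Cov(Y_{i,1}, Y_{j,0} | ℋ) > δ }|, where D = Σ_{j∈N} w_j Σ_{i: ij∈E∘} E[Y*_{ij}(1) − Y*_{ij}(0) | ℋ] with w_j = μ_{j,0}(1−μ_{j,0})/(n v²), and C_G = (1/(n v²)) Σ_{ij∈E_G} Cov(Y_{i,1}, Y_{j,0} | ℋ). -/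
open MeasureTheory ProbabilityTheory
open scoped Classical

set_option maxHeartbeats 1000000


lemma indicator_eq01 {Ω : Type*} {f : Ω → ℝ} (hb : ∀ ω, f ω = 0 ∨ f ω = 1) :
    (f ⁻¹' {1}).indicator (fun _ => (1:ℝ)) = f := by
  funext ω
  rcases hb ω with h | h <;> simp [Set.indicator_apply, h]

lemma integrable01 {Ω : Type*} [mΩ : MeasurableSpace Ω] {μ : Measure Ω} [IsProbabilityMeasure μ]
    {f : Ω → ℝ} (hf : Measurable f) (hb : ∀ ω, f ω = 0 ∨ f ω = 1) :
    Integrable f μ := by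
  refine Integrable.mono' (integrable_const (μ := μ) 1) hf.aestronglyMeasurable ?_
  filter_upwards with ω
  rcases hb ω with h | h <;> simp [h]

lemma condexp_mul_of_condIndep01 {Ω : Type*} [mΩ : MeasurableSpace Ω] [StandardBorelSpace Ω]
    {μ : Measure Ω} [IsProbabilityMeasure μ]
    {H : MeasurableSpace Ω} {hH : H ≤ mΩ} {f g : Ω → ℝ}
    (hf : Measurable[mΩ] f) (hg : Measurable[mΩ] g)
    (hf01 : ∀ ω, f ω = 0 ∨ f ω = 1) (hg01 : ∀ ω, g ω = 0 ∨ g ω = 1)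
    (hind : CondIndepFun H hH f g μ) :
    μ[fun ω => f ω * g ω | H] =ᵐ[μ] fun ω => (μ[f|H]) ω * (μ[g|H]) ω := by
  have h := (condIndepFun_iff_condExp_inter_preimage_eq_mul (m' := H) (hm' := hH) (μ := μ)
    hf hg).mp hind {1} {1} (measurableSet_singleton 1) (measurableSet_singleton 1)
  have hfg : (f ⁻¹' {1} ∩ g ⁻¹' {1}).indicator (fun _ => (1:ℝ)) = fun ω => f ω * g ω := by
    funext ω
    rcases hf01 ω with h1 | h1 <;> rcases hg01 ω with h2 | h2 <;>
      simp [Set.indicator_apply, Set.mem_inter_iff, h1, h2]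
  rw [hfg, indicator_eq01 hf01, indicator_eq01 hg01] at h
  exact h

lemma stmt16_alg {N : Type*} [Fintype N] [DecidableEq N] (E0 EG : Finset (N × N))
    (c d : N × N → ℝ) (m : N → ℝ) (δ : ℝ) (hδ : 0 < δ)
    (hA : ∀ e ∈ E0, c e = d e * (m e.2 * (1 - m e.2)))
    (hZ : ∀ e ∈ EG \ E0, c e = 0)
    (hNN : ∀ e ∈ E0 \ EG, 0 ≤ c e)
    (hv : 0 < (1 / (Fintype.card N : ℝ)) * ∑ l, m l * (1 - m l)) :
    (δ / ((Fintype.card N : ℝ) * ((1 / (Fintype.card N : ℝ)) * ∑ l, m l * (1 - m l))))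
        * ∑ i, ((Finset.univ.filter (fun j => (i, j) ∈ E0 \ EG ∧ δ < c (i, j))).card : ℝ)
      ≤ (∑ j, (m j * (1 - m j)
              / ((Fintype.card N : ℝ) * ((1 / (Fintype.card N : ℝ)) * ∑ l, m l * (1 - m l))))
            * ∑ i ∈ Finset.univ.filter (fun i => (i, j) ∈ E0), d (i, j))
        - (1 / ((Fintype.card N : ℝ) * ((1 / (Fintype.card N : ℝ)) * ∑ l, m l * (1 - m l))))
            * ∑ e ∈ EG, c e := by
  have hn : 0 < (Fintype.card N : ℝ) := by
    rcases Nat.eq_zero_or_pos (Fintype.card N) with h | h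
    · exfalso
      have : IsEmpty N := Fintype.card_eq_zero_iff.mp h
      simp [Finset.univ_eq_empty] at hv
    · exact_mod_cast h
  set v2 : ℝ := (1 / (Fintype.card N : ℝ)) * ∑ l, m l * (1 - m l) with hv2def
  set K : ℝ := (Fintype.card N : ℝ) * v2 with hKdef
  have hK : 0 < K := mul_pos hn hv
  have sum_edges : ∀ f : N × N → ℝ,
      ∑ j, ∑ i ∈ Finset.univ.filter (fun i => (i, j) ∈ E0), f (i, j) = ∑ e ∈ E0, f e := by
    intro f
    calc ∑ j, ∑ i ∈ Finset.univ.filter (fun i => (i, j) ∈ E0), f (i, j)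
        = ∑ j, ∑ i, if (i, j) ∈ E0 then f (i, j) else 0 := by simp_rw [Finset.sum_filter]
      _ = ∑ i, ∑ j, if (i, j) ∈ E0 then f (i, j) else 0 := Finset.sum_comm
      _ = ∑ e : N × N, if e ∈ E0 then f e else 0 :=
          (Fintype.sum_prod_type (f := fun e => if e ∈ E0 then f e else 0)).symm
      _ = ∑ e ∈ Finset.univ ∩ E0, f e := Finset.sum_ite_mem _ _ _
      _ = ∑ e ∈ E0, f e := by rw [Finset.univ_inter]
  have hD : (∑ j, (m j * (1 - m j) / K)
          * ∑ i ∈ Finset.univ.filter (fun i => (i, j) ∈ E0), d (i, j))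
      = (1 / K) * ∑ e ∈ E0, c e := by
    rw [Finset.mul_sum, ← sum_edges (fun e => (1 / K) * c e)]
    refine Finset.sum_congr rfl fun j _ => ?_
    rw [Finset.mul_sum]
    refine Finset.sum_congr rfl fun i hi => ?_
    rw [hA (i, j) (Finset.mem_filter.mp hi).2]
    ring
  have hCG : ∑ e ∈ EG, c e = ∑ e ∈ EG ∩ E0, c e := by
    rw [← Finset.sum_inter_add_sum_sdiff EG E0 c, Finset.sum_eq_zero hZ, add_zero]
  have hE0split : ∑ e ∈ E0, c e = ∑ e ∈ EG ∩ E0, c e + ∑ e ∈ E0 \ EG, c e := by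
    rw [← Finset.sum_inter_add_sum_sdiff E0 EG c, Finset.inter_comm]
  have hcount : (∑ i, ((Finset.univ.filter
        (fun j => (i, j) ∈ E0 \ EG ∧ δ < c (i, j))).card : ℝ))
      = ∑ e ∈ E0 \ EG, (if δ < c e then (1:ℝ) else 0) := by
    have h1 : ∀ i : N, ((Finset.univ.filter
          (fun j => (i, j) ∈ E0 \ EG ∧ δ < c (i, j))).card : ℝ)
        = ∑ j, if (i, j) ∈ E0 \ EG ∧ δ < c (i, j) then (1:ℝ) else 0 := by
      intro i
      rw [Finset.card_filter]
      push_cast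
      rfl
    calc ∑ i, ((Finset.univ.filter (fun j => (i, j) ∈ E0 \ EG ∧ δ < c (i, j))).card : ℝ)
        = ∑ i, ∑ j, if (i, j) ∈ E0 \ EG then (if δ < c (i, j) then (1:ℝ) else 0) else 0 := by
          simp_rw [h1, ite_and]
      _ = ∑ e : N × N, if e ∈ E0 \ EG then (if δ < c e then (1:ℝ) else 0) else 0 :=
          (Fintype.sum_prod_type
            (f := fun e => if e ∈ E0 \ EG then (if δ < c e then (1:ℝ) else 0) else 0)).symm
      _ = ∑ e ∈ Finset.univ ∩ (E0 \ EG), (if δ < c e then (1:ℝ) else 0) :=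
          Finset.sum_ite_mem _ _ _
      _ = ∑ e ∈ E0 \ EG, (if δ < c e then (1:ℝ) else 0) := by rw [Finset.univ_inter]
  calc (δ / K) * ∑ i, ((Finset.univ.filter
          (fun j => (i, j) ∈ E0 \ EG ∧ δ < c (i, j))).card : ℝ)
      = (1 / K) * ∑ e ∈ E0 \ EG, δ * (if δ < c e then (1:ℝ) else 0) := by
        rw [hcount, Finset.mul_sum, Finset.mul_sum]
        exact Finset.sum_congr rfl fun e _ => by ring
    _ ≤ (1 / K) * ∑ e ∈ E0 \ EG, c e := by
        refine mul_le_mul_of_nonneg_left (Finset.sum_le_sum fun e he => ?_) (by positivity)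
        by_cases h : δ < c e
        · simpa [h] using h.le
        · simpa [h] using hNN e he
    _ = _ := by
        rw [hD, hCG, hE0split]
        ring

/-- key finite-sample lower bound from the proof of Lemma B.20 of the
supplemental note to He–Song, "Measuring Diffusion over a Large Network".
The gap `D − C_G` between the diffusion over the latent causal graph `E∘` and the
covariance measure over the proxy graph `E_G` is bounded below, almost surely, by
`δ/(n v²)` times the number of missed causal edges whose conditional covariance
exceeds `δ`. -/
theorem stmt16 {Ω : Type*} [mΩ : MeasurableSpace Ω] [StandardBorelSpace Ω]
    (μ : Measure Ω) [IsProbabilityMeasure μ]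
    {N : Type*} [Fintype N] [DecidableEq N]
    (E0 EG : Finset (N × N)) (hE0 : ∀ e ∈ E0, e.1 ≠ e.2) (hEG : ∀ e ∈ EG, e.1 ≠ e.2)
    (Y0 Y1 : N → Ω → ℝ) (Ys1 Ys0 : N → N → Ω → ℝ)
    (hY0m : ∀ j, Measurable (Y0 j)) (hY1m : ∀ i, Measurable (Y1 i))
    (hYs1m : ∀ i j, (i, j) ∈ E0 → Measurable (Ys1 i j))
    (hYs0m : ∀ i j, (i, j) ∈ E0 → Measurable (Ys0 i j))
    (hY0b : ∀ j ω, Y0 j ω = 0 ∨ Y0 j ω = 1)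
    (hY1b : ∀ i ω, Y1 i ω = 0 ∨ Y1 i ω = 1)
    (hYs1b : ∀ i j, (i, j) ∈ E0 → ∀ ω, Ys1 i j ω = 0 ∨ Ys1 i j ω = 1)
    (hYs0b : ∀ i j, (i, j) ∈ E0 → ∀ ω, Ys0 i j ω = 0 ∨ Ys0 i j ω = 1)
    (H : MeasurableSpace Ω) (hH : H ≤ mΩ)
    -- consistency relations along causal edges
    (hcons1 : ∀ i j, (i, j) ∈ E0 →
      ∀ᵐ ω ∂μ, Y1 i ω * Y0 j ω = Ys1 i j ω * Y0 j ω)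
    (hcons0 : ∀ i j, (i, j) ∈ E0 →
      ∀ᵐ ω ∂μ, Y1 i ω * (1 - Y0 j ω) = Ys0 i j ω * (1 - Y0 j ω))
    -- unconfoundedness along causal edges
    (hindep : ∀ i j, (i, j) ∈ E0 →
      CondIndepFun H hH (fun ω => (Ys1 i j ω, Ys0 i j ω)) (Y0 j) μ)
    -- (a) vanishing covariance along non-causal proxy edges
    (hzero : ∀ i j, (i, j) ∈ EG \ E0 → condCov μ H (Y1 i) (Y0 j) =ᵐ[μ] 0)
    -- (b) nonnegative covariance along missed causal edges
    (hnonneg : ∀ i j, (i, j) ∈ E0 \ EG → ∀ᵐ ω ∂μ, 0 ≤ condCov μ H (Y1 i) (Y0 j) ω)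
    -- (c) the aggregated overlap condition `v² > 0` a.s.
    (hv : ∀ᵐ ω ∂μ,
      0 < (1 / (Fintype.card N : ℝ)) *
            ∑ j, (μ[Y0 j | H]) ω * (1 - (μ[Y0 j | H]) ω))
    (δ : ℝ) (hδ : 0 < δ) :
    ∀ᵐ ω ∂μ,
      (δ / ((Fintype.card N : ℝ) *
            ((1 / (Fintype.card N : ℝ)) *
              ∑ l, (μ[Y0 l | H]) ω * (1 - (μ[Y0 l | H]) ω))))
          * ∑ i, ((Finset.univ.filter (fun j =>
              (i, j) ∈ E0 \ EG ∧ δ < condCov μ H (Y1 i) (Y0 j) ω)).card : ℝ)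
        ≤ -- D
          (∑ j, ((μ[Y0 j | H]) ω * (1 - (μ[Y0 j | H]) ω)
              / ((Fintype.card N : ℝ) *
                  ((1 / (Fintype.card N : ℝ)) *
                    ∑ l, (μ[Y0 l | H]) ω * (1 - (μ[Y0 l | H]) ω))))
            * ∑ i ∈ Finset.univ.filter (fun i => (i, j) ∈ E0),
                (μ[fun ω' => Ys1 i j ω' - Ys0 i j ω' | H]) ω)
          -- − C_G
          - (1 / ((Fintype.card N : ℝ) *
              ((1 / (Fintype.card N : ℝ)) *
                ∑ l, (μ[Y0 l | H]) ω * (1 - (μ[Y0 l | H]) ω))))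
              * ∑ e ∈ EG, condCov μ H (Y1 e.1) (Y0 e.2) ω := by
  -- the per-edge identity, a.e. for all edges of `E0` simultaneously
  have hA : ∀ᵐ ω ∂μ, ∀ e ∈ (E0 : Set (N × N)),
      condCov μ H (Y1 e.1) (Y0 e.2) ω
        = (μ[fun ω' => Ys1 e.1 e.2 ω' - Ys0 e.1 e.2 ω' | H]) ω
          * ((μ[Y0 e.2 | H]) ω * (1 - (μ[Y0 e.2 | H]) ω)) := by
    rw [ae_ball_iff E0.finite_toSet.countable]
    rintro ⟨i, j⟩ he
    have he' : (i, j) ∈ E0 := he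
    have hY0i : Integrable (Y0 j) μ := integrable01 (mΩ := mΩ) (hY0m j) (hY0b j)
    have hYs1i : Integrable (Ys1 i j) μ := integrable01 (mΩ := mΩ) (hYs1m i j he') (hYs1b i j he')
    have hYs0i : Integrable (Ys0 i j) μ := integrable01 (mΩ := mΩ) (hYs0m i j he') (hYs0b i j he')
    have h1mY0b : ∀ ω, (1 - Y0 j ω) = 0 ∨ (1 - Y0 j ω) = 1 := by
      intro ω; rcases hY0b j ω with h | h <;> simp [h]
    -- conditional independence of the components
    have hind := hindep i j he'
    have hind1 : CondIndepFun H hH (Ys1 i j) (Y0 j) μ :=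
      hind.comp measurable_fst measurable_id
    have hind0 : CondIndepFun H hH (Ys0 i j) (Y0 j) μ :=
      hind.comp measurable_snd measurable_id
    have hind0' : CondIndepFun H hH (Ys0 i j) (fun ω => 1 - Y0 j ω) μ :=
      hind0.comp measurable_id (measurable_const.sub measurable_id)
    -- conditional expectation of 1 - Y0
    have hone : μ[fun ω => 1 - Y0 j ω | H] =ᵐ[μ] fun ω => 1 - (μ[Y0 j | H]) ω := by
      have h := condExp_sub (m := H) (μ := μ) (integrable_const (μ := μ) (1:ℝ)) hY0i
      refine h.trans ?_
      rw [condExp_const hH]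
      filter_upwards with ω
      simp
    -- E[Y1 Y0 | H] = E[Ys1|H] E[Y0|H]
    have hx1 : μ[fun ω => Y1 i ω * Y0 j ω | H]
        =ᵐ[μ] fun ω => (μ[Ys1 i j | H]) ω * (μ[Y0 j | H]) ω :=
      (condExp_congr_ae (hcons1 i j he')).trans
        (condexp_mul_of_condIndep01 (mΩ := mΩ) (hYs1m i j he') (hY0m j) (hYs1b i j he') (hY0b j) hind1)
    -- E[Y1 (1-Y0) | H] = E[Ys0|H] (1 - E[Y0|H])
    have hx0 : μ[fun ω => Y1 i ω * (1 - Y0 j ω) | H]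
        =ᵐ[μ] fun ω => (μ[Ys0 i j | H]) ω * (1 - (μ[Y0 j | H]) ω) := by
      refine ((condExp_congr_ae (hcons0 i j he')).trans
        (condexp_mul_of_condIndep01 (mΩ := mΩ) (hYs0m i j he')
          (measurable_const.sub (hY0m j)) (hYs0b i j he') h1mY0b hind0')).trans ?_
      filter_upwards [hone] with ω h
      rw [h]
    -- E[Y1|H] in terms of the potential outcomes
    have hb01 : ∀ f g : Ω → ℝ, (∀ ω, f ω = 0 ∨ f ω = 1) → (∀ ω, g ω = 0 ∨ g ω = 1) →
        ∀ ω, f ω * g ω = 0 ∨ f ω * g ω = 1 := by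
      intro f g hf hg ω
      rcases hf ω with h | h <;> rcases hg ω with h' | h' <;> simp [h, h']
    have hintm1 : Integrable (fun ω => Y1 i ω * Y0 j ω) μ :=
      integrable01 (mΩ := mΩ) ((hY1m i).mul (hY0m j)) (hb01 _ _ (hY1b i) (hY0b j))
    have hintm0 : Integrable (fun ω => Y1 i ω * (1 - Y0 j ω)) μ :=
      integrable01 (mΩ := mΩ) ((hY1m i).mul (measurable_const.sub (hY0m j)))
        (hb01 _ _ (hY1b i) h1mY0b)
    have hy : μ[Y1 i | H] =ᵐ[μ] fun ω =>
        (μ[Ys1 i j | H]) ω * (μ[Y0 j | H]) ω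
          + (μ[Ys0 i j | H]) ω * (1 - (μ[Y0 j | H]) ω) := by
      have hsplit : μ[Y1 i | H]
          =ᵐ[μ] μ[fun ω => Y1 i ω * Y0 j ω + Y1 i ω * (1 - Y0 j ω) | H] :=
        condExp_congr_ae (Filter.Eventually.of_forall fun ω => by ring)
      refine hsplit.trans ((condExp_add hintm1 hintm0 H).trans ?_)
      filter_upwards [hx1, hx0] with ω h1 h0
      simp only [Pi.add_apply, h1, h0]
    -- E[Ys1 - Ys0 | H]
    have hsub : μ[fun ω' => Ys1 i j ω' - Ys0 i j ω' | H]
        =ᵐ[μ] fun ω => (μ[Ys1 i j | H]) ω - (μ[Ys0 i j | H]) ω := by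
      have h := condExp_sub (m := H) (μ := μ) hYs1i hYs0i
      exact h.trans (by filter_upwards with ω; simp)
    filter_upwards [hx1, hy, hsub] with ω h1 h2 h3
    simp only [condCov, h1, h2, h3]
    ring
  -- vanishing covariance on EG \ E0, a.e. simultaneously
  have hZ : ∀ᵐ ω ∂μ, ∀ e ∈ ((EG \ E0 : Finset (N × N)) : Set (N × N)),
      condCov μ H (Y1 e.1) (Y0 e.2) ω = 0 := by
    rw [ae_ball_iff (EG \ E0).finite_toSet.countable]
    rintro ⟨i, j⟩ he
    filter_upwards [hzero i j he] with ω h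
    exact h
  -- nonnegative covariance on E0 \ EG, a.e. simultaneously
  have hNN : ∀ᵐ ω ∂μ, ∀ e ∈ ((E0 \ EG : Finset (N × N)) : Set (N × N)),
      0 ≤ condCov μ H (Y1 e.1) (Y0 e.2) ω := by
    rw [ae_ball_iff (E0 \ EG).finite_toSet.countable]
    rintro ⟨i, j⟩ he
    exact hnonneg i j he
  filter_upwards [hA, hZ, hNN, hv] with ω hAω hZω hNNω hvω
  exact stmt16_alg E0 EG
    (fun e => condCov μ H (Y1 e.1) (Y0 e.2) ω)
    (fun e => (μ[fun ω' => Ys1 e.1 e.2 ω' - Ys0 e.1 e.2 ω' | H]) ω)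
    (fun j => (μ[Y0 j | H]) ω) δ hδ
    (fun e he => hAω e he) (fun e he => hZω e he) (fun e he => hNNω e he) hvω
end
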